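/- arXiv:1806.08547 — 2 statements merged into one kernel-verified Lean document; each statement's English description precedes it below -/
import Mathlib

section
/- For the dynamic vertex cover problem, the (1+1) EA using the edge-based representation and fitness function f_e, starting from a search point that is a maximal matching (hence a 2-approximate vertex cover) of the instance before the change, finds a maximal matching, inducing a 2-approximate vertex cover of the new instance, in expected time O(m) after a dynamic addition of an edge, and in expected time O(m log m) after a dynamic deletion of an edge. -/
open scoped ENNReal
open Classical

noncomputable section

/-- Probability that the Markov chain with transition kernel `K`, started at `x`,
has not visited the target set `A` during the time steps `0, 1, …, t`. -/
def survive {S : Type*} (K : S → S → ℝ≥0∞) (A : S → Prop) : ℕ → S → ℝ≥0∞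
  | 0, x => if A x then 0 else 1
  | t + 1, x => if A x then 0 else ∑' y, K x y * survive K A t y

/-- Expected hitting time of the set `A` for the Markov chain with kernel `K` started at `x`,
computed as `∑_{t ≥ 0} Pr(T > t)`. -/
def hitTime {S : Type*} (K : S → S → ℝ≥0∞) (A : S → Prop) (x : S) : ℝ≥0∞ :=
  ∑' t, survive K A t x

/-- One step of a (1+1)-type algorithm: an offspring `z` is sampled from the mutation
distribution `pm x ·`; it replaces `x` iff `accept x z` holds. -/
def eaKernel {S : Type*} (pm : S → S → ℝ≥0∞) (accept : S → S → Prop) (x y : S) : ℝ≥0∞ :=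
  ∑' z, if (if accept x z then z else x) = y then pm x z else 0

/-- The number of one-bits of a bit string. -/
def ones {n : ℕ} (x : Fin n → Bool) : ℕ := (Finset.univ.filter fun i => x i = true).card

/-- Standard bit mutation: each of the `n` bits is flipped independently with probability `1/n`. -/
def pmutEA (n : ℕ) (x y : Fin n → Bool) : ℝ≥0∞ :=
  ((n : ℝ≥0∞)⁻¹) ^ hammingDist x y * (1 - (n : ℝ≥0∞)⁻¹) ^ (n - hammingDist x y)

/-- RLS mutation: exactly one bit, chosen uniformly at random, is flipped. -/
def pmutRLS (n : ℕ) (x y : Fin n → Bool) : ℝ≥0∞ :=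
  if hammingDist x y = 1 then (n : ℝ≥0∞)⁻¹ else 0


/-- Standard bit mutation on bit strings indexed by an arbitrary finite type:
each position is flipped independently with probability `1/m` where `m` is the
number of positions. -/
def pmutEAg {α : Type*} [Fintype α] [DecidableEq α] (x y : α → Bool) : ℝ≥0∞ :=
  ((Fintype.card α : ℝ≥0∞)⁻¹) ^ hammingDist x y *
    (1 - (Fintype.card α : ℝ≥0∞)⁻¹) ^ (Fintype.card α - hammingDist x y)

/-- RLS mutation on bit strings indexed by an arbitrary finite type:
exactly one position, chosen uniformly at random, is flipped. -/
def pmutRLSg {α : Type*} [Fintype α] [DecidableEq α] (x y : α → Bool) : ℝ≥0∞ :=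
  if hammingDist x y = 1 then (Fintype.card α : ℝ≥0∞)⁻¹ else 0

variable {V : Type} [Fintype V] [DecidableEq V]

/-- The set `E(x)` of edges chosen by the search point `x` in the edge-based representation. -/
def chosenE (G : SimpleGraph V) [DecidableRel G.Adj] (x : G.edgeFinset → Bool) :
    Finset (Sym2 V) :=
  (Finset.univ.filter fun e : G.edgeFinset => x e = true).image Subtype.val

/-- The cover set `V_C(x)`: all vertices adjacent to at least one chosen edge. -/
def coverSet (G : SimpleGraph V) [DecidableRel G.Adj] (x : G.edgeFinset → Bool) : Finset V :=
  Finset.univ.filter fun v => ∃ e ∈ chosenE G x, v ∈ e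

/-- The fitness function `f_e` of the edge-based approach (to be minimized). -/
def fVC (G : SimpleGraph V) [DecidableRel G.Adj] (x : G.edgeFinset → Bool) : ℕ :=
  (coverSet G x).card +
    (Fintype.card V + 1) *
      (G.edgeFinset.filter fun e => ¬∃ v ∈ coverSet G x, v ∈ e).card +
    (Fintype.card V + 1) * (G.edgeFinset.card + 1) *
      ((chosenE G x ×ˢ chosenE G x).filter fun p =>
        p.1 ≠ p.2 ∧ ∃ v : V, v ∈ p.1 ∧ v ∈ p.2).card

/-- A set of edges is a matching if no two distinct edges of it share a vertex. -/
def IsMatchingSet (s : Finset (Sym2 V)) : Prop :=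
  ∀ e ∈ s, ∀ e' ∈ s, e ≠ e' → ∀ v : V, ¬(v ∈ e ∧ v ∈ e')

/-- `s` is a maximal matching of `G`: a matching consisting of edges of `G` such that every
edge of `G` shares a vertex with some edge of `s`. -/
def IsMaximalMatchingOf (G : SimpleGraph V) [DecidableRel G.Adj]
    (s : Finset (Sym2 V)) : Prop :=
  s ⊆ G.edgeFinset ∧ IsMatchingSet s ∧
    ∀ e ∈ G.edgeFinset, ∃ e' ∈ s, ∃ v : V, v ∈ e ∧ v ∈ e'

/-- `C` is a vertex cover of `G`. -/
def IsVertexCover (G : SimpleGraph V) [DecidableRel G.Adj] (C : Finset V) : Prop :=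
  ∀ e ∈ G.edgeFinset, ∃ v ∈ C, v ∈ e

lemma drift_lemma {S : Type*} (K : S → S → ℝ≥0∞) (A : S → Prop) (Good : S → Prop) (φ : S → ℕ)
    (p : ℕ → ℝ≥0∞) (hp : ∀ u, p u ≠ 0)
    (hmass : ∀ x, Good x → ∑' y, K x y ≤ 1)
    (hclosed : ∀ x y, Good x → K x y ≠ 0 → Good y ∧ φ y ≤ φ x)
    (hzero : ∀ x, Good x → φ x = 0 → A x)
    (hdec : ∀ x, Good x → ¬ A x → p (φ x) ≤ ∑' y, if φ y < φ x then K x y else 0) :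
    ∀ x, Good x → hitTime K A x ≤ ∑ j ∈ Finset.range (φ x), (p (j+1))⁻¹ := by
  set g : ℕ → ℝ≥0∞ := fun u => ∑ j ∈ Finset.range u, (p (j+1))⁻¹ with hgdef
  have hgmono : Monotone g := by
    intro a b hab
    exact Finset.sum_le_sum_of_subset (Finset.range_subset_range.2 hab)
  have main : ∀ T x, Good x → ∑ t ∈ Finset.range T, survive K A t x ≤ g (φ x) := by
    intro T
    induction T with
    | zero => intro x _; simp
    | succ T ih =>
      intro x hx
      by_cases hA : A x
      · have hz : ∀ t, survive K A t x = 0 := by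
          intro t; cases t <;> simp [survive, hA]
        simp [hz]
      · have hu : 0 < φ x := Nat.pos_of_ne_zero (fun h => hA (hzero x hx h))
        set u := φ x with hu'
        set q : ℝ≥0∞ := ∑' y, if φ y < u then K x y else 0 with hq
        set r : ℝ≥0∞ := ∑' y, if φ y < u then 0 else K x y with hr
        have hqr : q + r ≤ 1 := by
          rw [hq, hr, ← ENNReal.tsum_add]
          have : ∀ y, (if φ y < u then K x y else 0) + (if φ y < u then 0 else K x y) = K x y := by
            intro y; by_cases h : φ y < u <;> simp [h]
          simpa [this] using hmass x hx
        have hq1 : q ≤ 1 := le_trans (le_add_right le_rfl) hqr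
        have hpq : p u ≤ q := hdec x hx hA
        have hpfin : p u ≠ ∞ := ne_top_of_le_ne_top (by simp) (le_trans hpq hq1)
        -- rewrite partial sum
        have step : ∑ t ∈ Finset.range (T+1), survive K A t x
            = 1 + ∑' y, K x y * ∑ t ∈ Finset.range T, survive K A t y := by
          rw [Finset.sum_range_succ']
          have h0 : survive K A 0 x = 1 := by simp [survive, hA]
          have hs : ∀ t, survive K A (t+1) x = ∑' y, K x y * survive K A t y := by
            intro t; simp [survive, hA]
          rw [h0]
          simp only [hs]
          rw [← Summable.tsum_finsetSum (fun i _ => ENNReal.summable)]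
          rw [add_comm]
          congr 1
          exact tsum_congr fun y => (Finset.mul_sum _ _ _).symm
        have key : ∀ y, K x y * (∑ t ∈ Finset.range T, survive K A t y)
            ≤ (if φ y < u then K x y else 0) * g (u - 1)
              + (if φ y < u then 0 else K x y) * g u := by
          intro y
          by_cases hK : K x y = 0
          · simp [hK]
          · obtain ⟨hGy, hφy⟩ := hclosed x y hx hK
            have hSy := ih y hGy
            by_cases hlt : φ y < u
            · simp only [hlt, if_true]
              rw [zero_mul, add_zero]
              exact mul_le_mul_right (le_trans hSy (hgmono (Nat.le_sub_one_of_lt hlt))) _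
            · simp only [hlt, if_false]
              rw [zero_mul, zero_add]
              exact mul_le_mul_right (le_trans hSy (hgmono hφy)) _
        have bound : ∑' y, K x y * ∑ t ∈ Finset.range T, survive K A t y
            ≤ q * g (u - 1) + r * g u := by
          calc ∑' y, K x y * ∑ t ∈ Finset.range T, survive K A t y
              ≤ ∑' y, ((if φ y < u then K x y else 0) * g (u - 1)
                + (if φ y < u then 0 else K x y) * g u) := ENNReal.tsum_le_tsum key
            _ = q * g (u - 1) + r * g u := by
                rw [ENNReal.tsum_add, ENNReal.tsum_mul_right, ENNReal.tsum_mul_right]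
        have hone : (1:ℝ≥0∞) ≤ q * (p u)⁻¹ := by
          have : p u * (p u)⁻¹ = 1 := ENNReal.mul_inv_cancel (hp u) hpfin
          calc (1:ℝ≥0∞) = p u * (p u)⁻¹ := this.symm
            _ ≤ q * (p u)⁻¹ := mul_le_mul_left hpq _
        have hgu : g u = g (u-1) + (p u)⁻¹ := by
          have h1 : u = (u-1)+1 := by omega
          simp only [hgdef]
          rw [h1, Finset.sum_range_succ, ← h1]
        calc ∑ t ∈ Finset.range (T+1), survive K A t x
            = 1 + ∑' y, K x y * ∑ t ∈ Finset.range T, survive K A t y := step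
          _ ≤ 1 + (q * g (u - 1) + r * g u) := by exact add_le_add_right bound 1
          _ ≤ q * (p u)⁻¹ + (q * g (u - 1) + r * g u) := add_le_add_left hone _
          _ = q * ((p u)⁻¹ + g (u-1)) + r * g u := by ring
          _ = q * g u + r * g u := by rw [hgu, add_comm (g (u-1))]
          _ = (q + r) * g u := by ring
          _ ≤ 1 * g u := mul_le_mul_left hqr _
          _ = g u := one_mul _
  intro x hx
  rw [hitTime, ENNReal.tsum_eq_iSup_sum]
  apply iSup_le
  intro s
  calc ∑ t ∈ s, survive K A t x ≤ ∑ t ∈ Finset.range (s.sup id + 1), survive K A t x := by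
        apply Finset.sum_le_sum_of_subset
        intro t ht
        simp only [Finset.mem_range]
        exact Nat.lt_succ_of_le (Finset.le_sup (f := id) ht)
    _ ≤ g (φ x) := main _ x hx

lemma pmutEAg_mass {α : Type*} [Fintype α] [DecidableEq α] (x : α → Bool) :
    ∑' z, pmutEAg x z ≤ 1 := by
  classical
  set n := Fintype.card α with hn
  set a : ℝ≥0∞ := (n : ℝ≥0∞)⁻¹ with ha
  set b : ℝ≥0∞ := 1 - a with hb
  rw [tsum_fintype]
  have hmap : ∀ z : α → Bool, pmutEAg x z
      = a ^ (Finset.univ.filter fun i => z i ≠ x i).card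
        * b ^ (Finset.univ \ (Finset.univ.filter fun i => z i ≠ x i)).card := by
    intro z
    have hd : hammingDist x z = (Finset.univ.filter fun i => z i ≠ x i).card := by
      rw [hammingDist]
      congr 1
      ext i
      simp [ne_comm]
    rw [pmutEAg, hd]
    congr 2
    rw [Finset.card_sdiff_of_subset (Finset.filter_subset _ _), Finset.card_univ]
  have hinj : Function.Injective (fun z : α → Bool => Finset.univ.filter fun i => z i ≠ x i) := by
    intro z w hzw
    funext i
    have := Finset.ext_iff.1 hzw i
    simp only [Finset.mem_filter, Finset.mem_univ, true_and] at this
    revert this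
    cases hz : z i <;> cases hw : w i <;> cases hx : x i <;> simp
  calc ∑ z : α → Bool, pmutEAg x z
      = ∑ z : α → Bool, (fun t : Finset α => a ^ t.card * b ^ (Finset.univ \ t).card)
          ((fun z : α → Bool => Finset.univ.filter fun i => z i ≠ x i) z) := by
        exact Finset.sum_congr rfl fun z _ => hmap z
    _ = ∑ t ∈ Finset.univ.image (fun z : α → Bool => Finset.univ.filter fun i => z i ≠ x i),
          a ^ t.card * b ^ (Finset.univ \ t).card := by
        rw [Finset.sum_image (fun z _ w _ h => hinj h)]
    _ ≤ ∑ t ∈ (Finset.univ : Finset (Finset α)), a ^ t.card * b ^ (Finset.univ \ t).card :=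
        Finset.sum_le_sum_of_subset (Finset.subset_univ _)
    _ = ∑ t ∈ (Finset.univ : Finset α).powerset, (∏ _i ∈ t, a) * ∏ _i ∈ Finset.univ \ t, b := by
        rw [Finset.powerset_univ]
        exact Finset.sum_congr rfl fun t _ => by rw [Finset.prod_const, Finset.prod_const]
    _ = ∏ _i ∈ (Finset.univ : Finset α), (a + b) := (Finset.prod_add _ _ _).symm
    _ ≤ ∏ _i ∈ (Finset.univ : Finset α), 1 := by
        apply Finset.prod_le_prod' 
        intro i _
        rcases Nat.eq_zero_or_pos n with h0 | h1
        · exact absurd (Finset.mem_univ i) (by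
            haveI : IsEmpty α := Fintype.card_eq_zero_iff.mp h0
            exact fun _ => (IsEmpty.false i))
        · have ha1 : a ≤ 1 := by
            rw [ha]
            apply ENNReal.inv_le_one.mpr
            exact_mod_cast h1
          rw [hb, add_tsub_cancel_of_le ha1]
    _ = 1 := Finset.prod_const_one


lemma real_pow_bound (n : ℕ) (hn : 1 ≤ n) : (4:ℝ)⁻¹ ≤ (1 - (n:ℝ)⁻¹) ^ (n - 1) := by
  rcases Nat.lt_or_ge n 2 with h2 | h2
  · interval_cases n
    · norm_num
  · set k := n - 1 with hk
    have hk1 : 1 ≤ k := by omega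
    have hkpos : (0:ℝ) < k := by exact_mod_cast hk1
    have hn' : (n:ℝ) = (k:ℝ) + 1 := by
      have : n = k + 1 := by omega
      exact_mod_cast congrArg (Nat.cast : ℕ → ℝ) this
    have hbase : (1 - (n:ℝ)⁻¹) = ((1 + (k:ℝ)⁻¹))⁻¹ := by
      rw [hn']
      field_simp
      ring
    rw [hbase, inv_pow]
    have hexp : ((1:ℝ) + (k:ℝ)⁻¹) ^ k ≤ 4 := by
      have h1 : ((1:ℝ) + (k:ℝ)⁻¹) ^ k ≤ Real.exp ((k:ℝ)⁻¹) ^ k := by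
        apply pow_le_pow_left₀ (by positivity)
        calc (1:ℝ) + (k:ℝ)⁻¹ = (k:ℝ)⁻¹ + 1 := by ring
          _ ≤ Real.exp ((k:ℝ)⁻¹) := Real.add_one_le_exp _
      have h2 : Real.exp ((k:ℝ)⁻¹) ^ k = Real.exp 1 := by
        rw [← Real.exp_nat_mul, mul_inv_cancel₀ (ne_of_gt hkpos)]
      calc ((1:ℝ) + (k:ℝ)⁻¹) ^ k ≤ Real.exp 1 := by rw [← h2]; exact h1
        _ ≤ 4 := by linarith [Real.exp_one_lt_d9]
    have hpos : (0:ℝ) < ((1:ℝ) + (k:ℝ)⁻¹) ^ k := by positivity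
    calc (4:ℝ)⁻¹ ≤ (((1:ℝ) + (k:ℝ)⁻¹) ^ k)⁻¹ := by
          apply inv_anti₀ hpos hexp
      _ ≤ (((1:ℝ) + (k:ℝ)⁻¹) ^ k)⁻¹ := le_rfl

lemma pmutEAg_single {α : Type*} [Fintype α] [DecidableEq α] (x y : α → Bool)
    (h1 : hammingDist x y = 1) (hn : 1 ≤ Fintype.card α) :
    ((4 * Fintype.card α : ℝ≥0∞))⁻¹ ≤ pmutEAg x y := by
  set n := Fintype.card α with hndef
  have hnR : (0:ℝ) < n := by exact_mod_cast hn
  have hcast : (1 : ℝ≥0∞) - (n : ℝ≥0∞)⁻¹ = ENNReal.ofReal (1 - (n:ℝ)⁻¹) := by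
    rw [ENNReal.ofReal_sub _ (by positivity), ENNReal.ofReal_one]
    congr 1
    rw [ENNReal.ofReal_inv_of_pos hnR, ENNReal.ofReal_natCast]
  rw [pmutEAg, h1, pow_one, hcast, ← ENNReal.ofReal_pow (by
        have : (n:ℝ)⁻¹ ≤ 1 := by
          rw [inv_le_one_iff₀]; right; exact_mod_cast hn
        linarith)]
  have hinv : ((4 * n : ℝ≥0∞))⁻¹ = (n:ℝ≥0∞)⁻¹ * ENNReal.ofReal (4:ℝ)⁻¹ := by
    rw [ENNReal.mul_inv (by simp) (by simp)]
    rw [mul_comm]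
    congr 1
    rw [ENNReal.ofReal_inv_of_pos (by norm_num : (0:ℝ) < 4)]
    norm_num
  rw [hinv]
  apply mul_le_mul_right
  exact ENNReal.ofReal_le_ofReal (by
    have := real_pow_bound n hn
    simpa [hndef] using this)

lemma eaKernel_mass {S : Type*} (pm : S → S → ℝ≥0∞) (accept : S → S → Prop) (x : S) :
    ∑' y, eaKernel pm accept x y = ∑' z, pm x z := by
  simp only [eaKernel]
  rw [ENNReal.tsum_comm]
  exact tsum_congr fun z => by
    rw [tsum_eq_single (if accept x z then z else x) (fun y hy => if_neg (Ne.symm hy)), if_pos rfl]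

lemma eaKernel_support {S : Type*} (pm : S → S → ℝ≥0∞) (accept : S → S → Prop) (x y : S)
    (h : eaKernel pm accept x y ≠ 0) : y = x ∨ accept x y := by
  rw [eaKernel, Ne, ENNReal.tsum_eq_zero] at h
  push_neg at h
  obtain ⟨z, hz⟩ := h
  by_cases hc : (if accept x z then z else x) = y
  · by_cases ha : accept x z
    · right; rw [if_pos ha] at hc; exact hc ▸ ha
    · left; rw [if_neg ha] at hc; exact hc.symm
  · simp [hc] at hz

lemma eaKernel_ge {S : Type*} (pm : S → S → ℝ≥0∞) (accept : S → S → Prop) (x y : S)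
    (h : accept x y) : pm x y ≤ eaKernel pm accept x y := by
  have : (if (if accept x y then y else x) = y then pm x y else 0) = pm x y := by
    rw [if_pos h, if_pos rfl]
  rw [eaKernel]
  calc pm x y = (if (if accept x y then y else x) = y then pm x y else 0) := this.symm
    _ ≤ _ := ENNReal.le_tsum y

/-- number of uncovered edges -/
def uncovN (G : SimpleGraph V) [DecidableRel G.Adj] (x : G.edgeFinset → Bool) : ℕ :=
  (G.edgeFinset.filter fun e => ¬∃ v ∈ coverSet G x, v ∈ e).card

/-- number of colliding pairs -/
def ncol (G : SimpleGraph V) [DecidableRel G.Adj] (x : G.edgeFinset → Bool) : ℕ :=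
  ((chosenE G x ×ˢ chosenE G x).filter fun p =>
        p.1 ≠ p.2 ∧ ∃ v : V, v ∈ p.1 ∧ v ∈ p.2).card

lemma fVC_eq (G : SimpleGraph V) [DecidableRel G.Adj] (x : G.edgeFinset → Bool) :
    fVC G x = (coverSet G x).card + (Fintype.card V + 1) * uncovN G x
      + (Fintype.card V + 1) * (G.edgeFinset.card + 1) * ncol G x := rfl

variable {G : SimpleGraph V} [DecidableRel G.Adj]

lemma mem_chosenE (x : G.edgeFinset → Bool) (i : G.edgeFinset) :
    (i : Sym2 V) ∈ chosenE G x ↔ x i = true := by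
  simp only [chosenE, Finset.mem_image, Finset.mem_filter, Finset.mem_univ, true_and]
  constructor
  · rintro ⟨j, hj, hji⟩
    rwa [Subtype.ext hji] at hj
  · intro h; exact ⟨i, h, rfl⟩

lemma chosenE_subset (x : G.edgeFinset → Bool) : chosenE G x ⊆ G.edgeFinset := by
  intro e he
  simp only [chosenE, Finset.mem_image, Finset.mem_filter] at he
  obtain ⟨j, _, hj⟩ := he
  exact hj ▸ j.2

lemma mem_coverSet (x : G.edgeFinset → Bool) (v : V) :
    v ∈ coverSet G x ↔ ∃ e ∈ chosenE G x, v ∈ e := by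
  simp [coverSet]

omit [Fintype V] [DecidableEq V] in
lemma exists_mem_sym2 (e : Sym2 V) : ∃ v : V, v ∈ e :=
  ⟨e.out.1, Sym2.out_fst_mem e⟩

lemma card_filter_mem_sym2 (e : Sym2 V) :
    (Finset.univ.filter (· ∈ e)).card ≤ 2 := by
  induction e using Sym2.ind with
  | _ a b =>
    have hsub : (Finset.univ.filter (· ∈ s(a,b))) ⊆ {a, b} := by
      intro v hv
      simp only [Finset.mem_filter, Sym2.mem_iff] at hv
      simp only [Finset.mem_insert, Finset.mem_singleton]
      exact hv.2
    calc (Finset.univ.filter (· ∈ s(a,b))).card ≤ ({a,b} : Finset V).card :=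
          Finset.card_le_card hsub
      _ ≤ 2 := Finset.card_insert_le a {b} |>.trans (by simp)

lemma ncol_eq_zero (x : G.edgeFinset → Bool) (h : IsMatchingSet (chosenE G x)) :
    ncol G x = 0 := by
  rw [ncol, Finset.card_eq_zero, Finset.filter_eq_empty_iff]
  rintro ⟨e, e'⟩ hp
  rw [Finset.mem_product] at hp
  rintro ⟨hne, v, hv, hv'⟩
  exact h e hp.1 e' hp.2 hne v ⟨hv, hv'⟩

lemma matching_of_ncol_eq_zero (x : G.edgeFinset → Bool) (h : ncol G x = 0) :
    IsMatchingSet (chosenE G x) := by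
  intro e he e' he' hne v hv
  rw [ncol, Finset.card_eq_zero, Finset.filter_eq_empty_iff] at h
  have h2 := h (show (e, e') ∈ chosenE G x ×ˢ chosenE G x from Finset.mem_product.2 ⟨he, he'⟩)
  simp only [not_and, not_exists] at h2
  exact h2 hne v hv.1 hv.2

lemma cover_card_le (x : G.edgeFinset → Bool) : (coverSet G x).card ≤ Fintype.card V := by
  rw [coverSet, ← Finset.card_univ]
  exact Finset.card_filter_le _ _

lemma uncovN_le (x : G.edgeFinset → Bool) : uncovN G x ≤ G.edgeFinset.card :=
  Finset.card_filter_le _ _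

lemma fVC_lt (x : G.edgeFinset → Bool) (h : IsMatchingSet (chosenE G x)) :
    fVC G x < (Fintype.card V + 1) * (G.edgeFinset.card + 1) := by
  rw [fVC_eq, ncol_eq_zero x h, mul_zero, add_zero]
  have h1 := cover_card_le x
  have h2 := uncovN_le x
  have h3 : (Fintype.card V + 1) * uncovN G x ≤ (Fintype.card V + 1) * G.edgeFinset.card :=
    Nat.mul_le_mul_left _ h2
  have h4 : (Fintype.card V + 1) * (G.edgeFinset.card + 1)
      = (Fintype.card V + 1) * G.edgeFinset.card + (Fintype.card V + 1) := by ring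
  omega

lemma accept_closed (x y : G.edgeFinset → Bool) (hx : IsMatchingSet (chosenE G x))
    (hy : fVC G y ≤ fVC G x) :
    IsMatchingSet (chosenE G y) ∧ uncovN G y ≤ uncovN G x := by
  have hxlt := fVC_lt x hx
  have hc : ncol G y = 0 := by
    by_contra hc
    have h1 : 1 ≤ ncol G y := Nat.one_le_iff_ne_zero.2 hc
    have : (Fintype.card V + 1) * (G.edgeFinset.card + 1) ≤ fVC G y := by
      rw [fVC_eq]
      calc (Fintype.card V + 1) * (G.edgeFinset.card + 1)
          = (Fintype.card V + 1) * (G.edgeFinset.card + 1) * 1 := by ring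
        _ ≤ (Fintype.card V + 1) * (G.edgeFinset.card + 1) * ncol G y :=
            Nat.mul_le_mul_left _ h1
        _ ≤ _ := Nat.le_add_left _ _
    omega
  refine ⟨matching_of_ncol_eq_zero y hc, ?_⟩
  by_contra hlt
  push_neg at hlt
  have h1 : uncovN G x + 1 ≤ uncovN G y := hlt
  have h2 : (Fintype.card V + 1) * (uncovN G x + 1) ≤ (Fintype.card V + 1) * uncovN G y :=
    Nat.mul_le_mul_left _ h1
  have h3 : (Fintype.card V + 1) * uncovN G y ≤ fVC G y := by
    rw [fVC_eq]; omega
  have h4 : fVC G x ≤ Fintype.card V + (Fintype.card V + 1) * uncovN G x := by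
    rw [fVC_eq, ncol_eq_zero x hx, mul_zero, add_zero]
    have := cover_card_le x
    omega
  have h5 : (Fintype.card V + 1) * (uncovN G x + 1)
      = (Fintype.card V + 1) * uncovN G x + (Fintype.card V + 1) := by ring
  omega

lemma mem_chosenE_update (x : G.edgeFinset → Bool) (i : G.edgeFinset) (e : Sym2 V) :
    e ∈ chosenE G (Function.update x i true) ↔ (e = (i : Sym2 V) ∨ e ∈ chosenE G x) := by
  constructor
  · intro he
    simp only [chosenE, Finset.mem_image, Finset.mem_filter, Finset.mem_univ, true_and] at he
    obtain ⟨j, hj, rfl⟩ := he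
    by_cases hji : j = i
    · left; rw [hji]
    · right
      rw [Function.update_of_ne hji] at hj
      exact (mem_chosenE x j).2 hj
  · rintro (rfl | he)
    · exact (mem_chosenE _ i).2 (by rw [Function.update_self])
    · simp only [chosenE, Finset.mem_image, Finset.mem_filter, Finset.mem_univ, true_and] at he ⊢
      obtain ⟨j, hj, rfl⟩ := he
      by_cases hji : j = i
      · exact ⟨j, by rw [hji, Function.update_self], rfl⟩
      · exact ⟨j, by rwa [Function.update_of_ne hji], rfl⟩

lemma flip_lemma (x : G.edgeFinset → Bool) (hx : IsMatchingSet (chosenE G x))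
    (i : G.edgeFinset) (hi : ¬∃ v ∈ coverSet G x, v ∈ (i : Sym2 V))
    (hV : 1 ≤ Fintype.card V) :
    IsMatchingSet (chosenE G (Function.update x i true)) ∧
    uncovN G (Function.update x i true) < uncovN G x ∧
    fVC G (Function.update x i true) ≤ fVC G x ∧
    hammingDist x (Function.update x i true) = 1 := by
  set y := Function.update x i true with hy
  have hcovmono : coverSet G x ⊆ coverSet G y := by
    intro v hv
    rw [mem_coverSet] at hv ⊢
    obtain ⟨e, he, hve⟩ := hv
    exact ⟨e, (mem_chosenE_update x i e).2 (Or.inr he), hve⟩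
  have hmy : IsMatchingSet (chosenE G y) := by
    intro e he e' he' hne v hv
    rw [mem_chosenE_update] at he he'
    rcases he with rfl | he <;> rcases he' with rfl | he'
    · exact hne rfl
    · exact hi ⟨v, (mem_coverSet x v).2 ⟨e', he', hv.2⟩, hv.1⟩
    · exact hi ⟨v, (mem_coverSet x v).2 ⟨e, he, hv.1⟩, hv.2⟩
    · exact hx e he e' he' hne v hv
  have hicov : ∃ v ∈ coverSet G y, v ∈ (i : Sym2 V) := by
    obtain ⟨v, hv⟩ := exists_mem_sym2 (i : Sym2 V)
    exact ⟨v, (mem_coverSet y v).2 ⟨(i : Sym2 V), (mem_chosenE_update x i _).2 (Or.inl rfl), hv⟩, hv⟩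
  have hiu : (i : Sym2 V) ∈ G.edgeFinset.filter fun e => ¬∃ v ∈ coverSet G x, v ∈ e :=
    Finset.mem_filter.2 ⟨i.2, hi⟩
  have hsub : (G.edgeFinset.filter fun e => ¬∃ v ∈ coverSet G y, v ∈ e)
      ⊆ (G.edgeFinset.filter fun e => ¬∃ v ∈ coverSet G x, v ∈ e).erase (i : Sym2 V) := by
    intro e he
    rw [Finset.mem_filter] at he
    apply Finset.mem_erase.2
    constructor
    · rintro rfl; exact he.2 hicov
    · exact Finset.mem_filter.2 ⟨he.1, fun ⟨v, hv, hve⟩ => he.2 ⟨v, hcovmono hv, hve⟩⟩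
  have hulty : uncovN G y < uncovN G x := by
    have h1 : uncovN G y ≤ uncovN G x - 1 := by
      calc uncovN G y ≤ ((G.edgeFinset.filter fun e => ¬∃ v ∈ coverSet G x, v ∈ e).erase
            (i : Sym2 V)).card := Finset.card_le_card hsub
        _ = uncovN G x - 1 := Finset.card_erase_of_mem hiu
    have h2 : 1 ≤ uncovN G x := Finset.card_pos.2 ⟨_, hiu⟩
    omega
  have hcovy : (coverSet G y).card ≤ (coverSet G x).card + 2 := by
    have hsub2 : coverSet G y ⊆ coverSet G x ∪ Finset.univ.filter (· ∈ (i : Sym2 V)) := by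
      intro v hv
      rw [mem_coverSet] at hv
      obtain ⟨e, he, hve⟩ := hv
      rw [mem_chosenE_update] at he
      rcases he with rfl | he
      · exact Finset.mem_union_right _ (Finset.mem_filter.2 ⟨Finset.mem_univ v, hve⟩)
      · exact Finset.mem_union_left _ ((mem_coverSet x v).2 ⟨e, he, hve⟩)
    calc (coverSet G y).card ≤ (coverSet G x ∪ Finset.univ.filter (· ∈ (i : Sym2 V))).card :=
          Finset.card_le_card hsub2
      _ ≤ (coverSet G x).card + (Finset.univ.filter (· ∈ (i : Sym2 V))).card :=
          Finset.card_union_le _ _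
      _ ≤ (coverSet G x).card + 2 := Nat.add_le_add_left (card_filter_mem_sym2 _) _
  have hfy : fVC G y ≤ fVC G x := by
    have e1 : fVC G y = (coverSet G y).card + (Fintype.card V + 1) * uncovN G y := by
      rw [fVC_eq, ncol_eq_zero y hmy, mul_zero, add_zero]
    have e2 : fVC G x = (coverSet G x).card + (Fintype.card V + 1) * uncovN G x := by
      rw [fVC_eq, ncol_eq_zero x hx, mul_zero, add_zero]
    have h3 : uncovN G y + 1 ≤ uncovN G x := hulty
    calc fVC G y = (coverSet G y).card + (Fintype.card V + 1) * uncovN G y := e1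
      _ ≤ ((coverSet G x).card + 2) + (Fintype.card V + 1) * uncovN G y :=
          Nat.add_le_add_right hcovy _
      _ ≤ ((coverSet G x).card + (Fintype.card V + 1)) + (Fintype.card V + 1) * uncovN G y :=
          Nat.add_le_add_right (Nat.add_le_add_left (by omega) _) _
      _ = (coverSet G x).card + (Fintype.card V + 1) * (uncovN G y + 1) := by ring
      _ ≤ (coverSet G x).card + (Fintype.card V + 1) * uncovN G x :=
          Nat.add_le_add_left (Nat.mul_le_mul_left _ h3) _
      _ = fVC G x := e2.symm
  have hxi : x i = false := by
    by_contra h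
    have hxi' : x i = true := by
      cases hxv : x i
      · exact absurd hxv h
      · rfl
    obtain ⟨v, hv⟩ := exists_mem_sym2 (i : Sym2 V)
    exact hi ⟨v, (mem_coverSet x v).2 ⟨(i : Sym2 V), (mem_chosenE x i).2 hxi', hv⟩, hv⟩
  have hham : hammingDist x y = 1 := by
    have : (Finset.univ.filter fun j => x j ≠ y j) = {i} := by
      ext j
      simp only [Finset.mem_filter, Finset.mem_univ, true_and, Finset.mem_singleton]
      constructor
      · intro hj
        by_contra hji
        exact hj (by rw [hy, Function.update_of_ne hji])
      · rintro rfl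
        rw [hy, Function.update_self, hxi]
        simp
    rw [hammingDist, this, Finset.card_singleton]
  exact ⟨hmy, hulty, hfy, hham⟩

lemma maximal_of_uncov_zero (x : G.edgeFinset → Bool) (h1 : IsMatchingSet (chosenE G x))
    (h2 : uncovN G x = 0) : IsMaximalMatchingOf G (chosenE G x) := by
  refine ⟨chosenE_subset x, h1, ?_⟩
  intro e he
  rw [uncovN, Finset.card_eq_zero, Finset.filter_eq_empty_iff] at h2
  have := h2 he
  push_neg at this
  obtain ⟨v, hv, hve⟩ := this
  rw [mem_coverSet] at hv
  obtain ⟨e', he', hve'⟩ := hv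
  exact ⟨e', he', v, hve, hve'⟩

lemma uncov_zero_of_maximal (x : G.edgeFinset → Bool)
    (h : IsMaximalMatchingOf G (chosenE G x)) : uncovN G x = 0 := by
  rw [uncovN, Finset.card_eq_zero, Finset.filter_eq_empty_iff]
  intro e he
  obtain ⟨e', he', v, hv, hv'⟩ := h.2.2 e he
  simp only [not_not]
  exact ⟨v, (mem_coverSet x v).2 ⟨e', he', hv'⟩, hv⟩

lemma two_approx (x : G.edgeFinset → Bool) (h : IsMaximalMatchingOf G (chosenE G x)) :
    IsVertexCover G (coverSet G x) ∧
      ∀ C : Finset V, IsVertexCover G C → (coverSet G x).card ≤ 2 * C.card := by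
  obtain ⟨hsub, hmatch, hmax⟩ := h
  constructor
  · intro e he
    obtain ⟨e', he', v, hv, hv'⟩ := hmax e he
    exact ⟨v, (mem_coverSet x v).2 ⟨e', he', hv'⟩, hv⟩
  · intro C hC
    set s := chosenE G x with hs
    -- |coverSet| ≤ 2 * |s|
    have h1 : (coverSet G x).card ≤ 2 * s.card := by
      have hsub2 : coverSet G x ⊆ s.biUnion (fun e => Finset.univ.filter (· ∈ e)) := by
        intro v hv
        rw [mem_coverSet] at hv
        obtain ⟨e, he, hve⟩ := hv
        exact Finset.mem_biUnion.2 ⟨e, he, Finset.mem_filter.2 ⟨Finset.mem_univ v, hve⟩⟩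
      calc (coverSet G x).card ≤ (s.biUnion (fun e => Finset.univ.filter (· ∈ e))).card :=
            Finset.card_le_card hsub2
        _ ≤ ∑ e ∈ s, (Finset.univ.filter (· ∈ e)).card := Finset.card_biUnion_le
        _ ≤ ∑ _e ∈ s, 2 := Finset.sum_le_sum fun e _ => card_filter_mem_sym2 e
        _ = 2 * s.card := by rw [Finset.sum_const, smul_eq_mul, mul_comm]
    -- |s| ≤ |C|
    have h2 : s.card ≤ C.card := by
      have hpick : ∀ e ∈ s, ∃ v ∈ C, v ∈ e := fun e he => hC e (hsub he)
      set f : Sym2 V → V := fun e => if h : ∃ v ∈ C, v ∈ e then h.choose else e.out.1 with hf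
      apply Finset.card_le_card_of_injOn f
      · intro e he
        have h := hpick e he
        rw [hf]
        simp only [dif_pos h]
        exact h.choose_spec.1
      · intro e he e' he' hee
        by_contra hne
        have h := hpick e he
        have h' := hpick e' he'
        have hv : f e ∈ e := by rw [hf]; simp only [dif_pos h]; exact h.choose_spec.2
        have hv' : f e' ∈ e' := by rw [hf]; simp only [dif_pos h']; exact h'.choose_spec.2
        exact hmatch e he e' he' hne (f e) ⟨hv, hee ▸ hv'⟩
    omega

omit [Fintype V] [DecidableEq V] in
lemma matching_subset {s t : Finset (Sym2 V)} (h : IsMatchingSet t) (hst : s ⊆ t) :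
    IsMatchingSet s := fun e he e' he' hne v hv => h e (hst he) e' (hst he') hne v hv


lemma uncov_bit_false {G : SimpleGraph V} [DecidableRel G.Adj] (x : G.edgeFinset → Bool)
    (i : G.edgeFinset) (hi : ¬∃ v ∈ coverSet G x, v ∈ (i : Sym2 V)) : x i = false := by
  by_contra h
  have hxi' : x i = true := by
    cases hxv : x i
    · exact absurd hxv h
    · rfl
  obtain ⟨v, hv⟩ := exists_mem_sym2 (i : Sym2 V)
  exact hi ⟨v, (mem_coverSet x v).2 ⟨(i : Sym2 V), (mem_chosenE x i).2 hxi', hv⟩, hv⟩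

lemma main_bound (G' : SimpleGraph V) [DecidableRel G'.Adj] (hm : 1 ≤ G'.edgeFinset.card)
    (x₀ : G'.edgeFinset → Bool) (h0 : IsMatchingSet (chosenE G' x₀)) :
    hitTime (eaKernel pmutEAg fun x z => fVC G' z ≤ fVC G' x)
        (fun x => IsMaximalMatchingOf G' (chosenE G' x)) x₀
      ≤ ∑ j ∈ Finset.range (uncovN G' x₀),
          (((j:ℝ≥0∞)+1) * ((4 * G'.edgeFinset.card : ℝ≥0∞))⁻¹)⁻¹ := by
  have hV : 1 ≤ Fintype.card V := by
    obtain ⟨e, he⟩ := Finset.card_pos.1 hm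
    obtain ⟨v, _⟩ := exists_mem_sym2 e
    exact Fintype.card_pos_iff.2 ⟨v⟩
  set m := G'.edgeFinset.card with hmdef
  have hmcoe : Fintype.card ↥G'.edgeFinset = m := Fintype.card_coe _
  set p : ℕ → ℝ≥0∞ := fun u => if u = 0 then 1 else (u:ℝ≥0∞) * ((4 * m : ℝ≥0∞))⁻¹ with hp
  have h4m : (4 * m : ℝ≥0∞) ≠ 0 := by
    simp only [ne_eq, mul_eq_zero, not_or]
    constructor
    · norm_num
    · exact_mod_cast Nat.one_le_iff_ne_zero.mp hm
  have h4m' : (4 * m : ℝ≥0∞) ≠ ⊤ := by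
    simp [ENNReal.mul_eq_top]
  have hpne : ∀ u, p u ≠ 0 := by
    intro u
    rw [hp]
    by_cases h : u = 0
    · simp [h]
    · simp only [h, if_false]
      apply mul_ne_zero
      · exact_mod_cast h
      · simp [h4m']
  have hdrift := drift_lemma (eaKernel pmutEAg fun x z => fVC G' z ≤ fVC G' x)
      (fun x => IsMaximalMatchingOf G' (chosenE G' x))
      (fun x => IsMatchingSet (chosenE G' x)) (uncovN G') p hpne
      ?_ ?_ ?_ ?_ x₀ h0
  · refine le_trans hdrift (le_of_eq (Finset.sum_congr rfl fun j _ => ?_))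
    rw [hp]
    simp only [Nat.succ_ne_zero, if_false]
    congr 2
    push_cast
    ring
  · intro x _
    rw [eaKernel_mass]
    exact pmutEAg_mass x
  · intro x y hx hK
    rcases eaKernel_support _ _ x y hK with rfl | hacc
    · exact ⟨hx, le_rfl⟩
    · exact accept_closed x y hx hacc
  · intro x hx h0'
    exact maximal_of_uncov_zero x hx h0'
  · intro x hx hA
    have hu : 0 < uncovN G' x := by
      rcases Nat.eq_zero_or_pos (uncovN G' x) with h | h
      · exact absurd (maximal_of_uncov_zero x hx h) hA
      · exact h
    set U' : Finset ↥G'.edgeFinset :=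
      Finset.univ.filter (fun i => ¬∃ v ∈ coverSet G' x, v ∈ (i:Sym2 V)) with hU'
    have himg : U'.image Subtype.val
        = G'.edgeFinset.filter (fun e => ¬∃ v ∈ coverSet G' x, v ∈ e) := by
      ext e
      simp only [hU', Finset.mem_image, Finset.mem_filter, Finset.mem_univ, true_and]
      constructor
      · rintro ⟨i, hi, rfl⟩; exact ⟨i.2, hi⟩
      · rintro ⟨he, hu'⟩; exact ⟨⟨e, he⟩, hu', rfl⟩
    have hcardU : U'.card = uncovN G' x := by
      rw [uncovN, ← himg]
      exact (Finset.card_image_of_injective _ Subtype.val_injective).symm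
    set f : ↥G'.edgeFinset → (↥G'.edgeFinset → Bool) := fun i => Function.update x i true with hf
    have hflip : ∀ i ∈ U', IsMatchingSet (chosenE G' (f i)) ∧
        uncovN G' (f i) < uncovN G' x ∧ fVC G' (f i) ≤ fVC G' x ∧ hammingDist x (f i) = 1 := by
      intro i hi
      rw [hU', Finset.mem_filter] at hi
      exact flip_lemma x hx i hi.2 hV
    have hinj : Set.InjOn f U' := by
      intro i hi j hj hij
      by_contra hne
      have h1 : f i i = true := Function.update_self i true x
      have h2 : f j i = x i := Function.update_of_ne hne true x
      rw [Finset.mem_coe, hU', Finset.mem_filter] at hi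
      have h3 : x i = false := uncov_bit_false x i hi.2
      rw [hij] at h1
      rw [h1] at h2
      rw [h3] at h2
      exact Bool.noConfusion h2
    set T := U'.image f with hT
    have hTcard : T.card = uncovN G' x := by
      rw [hT, Finset.card_image_of_injOn hinj, hcardU]
    calc p (uncovN G' x) = (uncovN G' x : ℝ≥0∞) * ((4 * m : ℝ≥0∞))⁻¹ := by
          rw [hp]; simp [Nat.one_le_iff_ne_zero.mp hu]
      _ = ∑ _y ∈ T, ((4 * m : ℝ≥0∞))⁻¹ := by
          rw [Finset.sum_const, hTcard, nsmul_eq_mul]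
      _ ≤ ∑ y ∈ T, (if uncovN G' y < uncovN G' x
            then eaKernel pmutEAg (fun x z => fVC G' z ≤ fVC G' x) x y else 0) := by
          apply Finset.sum_le_sum
          intro y hy
          rw [hT, Finset.mem_image] at hy
          obtain ⟨i, hi, rfl⟩ := hy
          obtain ⟨_, hlt, hacc, hham⟩ := hflip i hi
          rw [if_pos hlt]
          calc ((4 * m : ℝ≥0∞))⁻¹ = ((4 * Fintype.card ↥G'.edgeFinset : ℝ≥0∞))⁻¹ := by
                rw [hmcoe]
            _ ≤ pmutEAg x (f i) := pmutEAg_single x (f i) hham (by rw [hmcoe]; exact hm)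
            _ ≤ eaKernel pmutEAg (fun x z => fVC G' z ≤ fVC G' x) x (f i) :=
                eaKernel_ge _ _ x (f i) hacc
      _ ≤ ∑' y, (if uncovN G' y < uncovN G' x
            then eaKernel pmutEAg (fun x z => fVC G' z ≤ fVC G' x) x y else 0) :=
          ENNReal.sum_le_tsum T



lemma term_eq (m : ℕ) (hm : 1 ≤ m) (j : ℕ) :
    (((j:ℝ≥0∞)+1) * ((4 * (m:ℝ≥0∞)))⁻¹)⁻¹ = ENNReal.ofReal ((4*(m:ℝ)) * ((j:ℝ)+1)⁻¹) := by
  have hmR : (0:ℝ) < m := by exact_mod_cast hm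
  have h4m0 : (4 * (m:ℝ≥0∞)) ≠ 0 := by
    simp only [ne_eq, mul_eq_zero, not_or]
    exact ⟨by norm_num, by exact_mod_cast Nat.one_le_iff_ne_zero.mp hm⟩
  have h4m' : (4 * (m:ℝ≥0∞)) ≠ ⊤ := by simp [ENNReal.mul_eq_top]
  have hdiv : ((j:ℝ≥0∞)+1) * ((4 * (m:ℝ≥0∞)))⁻¹ = ((j:ℝ≥0∞)+1) / (4 * (m:ℝ≥0∞)) := rfl
  rw [hdiv, ENNReal.inv_div (Or.inl h4m') (Or.inl h4m0)]
  have hcast1 : (4 * (m:ℝ≥0∞)) = ENNReal.ofReal (4 * (m:ℝ)) := by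
    rw [ENNReal.ofReal_mul (by norm_num), ENNReal.ofReal_natCast]
    norm_num
  have hcast2 : ((j:ℝ≥0∞)+1) = ENNReal.ofReal ((j:ℝ)+1) := by
    rw [ENNReal.ofReal_add (by positivity) (by norm_num), ENNReal.ofReal_natCast,
      ENNReal.ofReal_one]
  rw [hcast1, hcast2, ← ENNReal.ofReal_div_of_pos (by positivity), div_eq_mul_inv]

lemma sum_bound_one (m : ℕ) (hm : 1 ≤ m) (u : ℕ) (hu : u ≤ 1) :
    ∑ j ∈ Finset.range u, (((j:ℝ≥0∞)+1) * ((4 * (m:ℝ≥0∞)))⁻¹)⁻¹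
      ≤ ENNReal.ofReal (12 * m) := by
  have hmR : (0:ℝ) < m := by exact_mod_cast hm
  calc ∑ j ∈ Finset.range u, (((j:ℝ≥0∞)+1) * ((4 * (m:ℝ≥0∞)))⁻¹)⁻¹
      ≤ ∑ j ∈ Finset.range 1, (((j:ℝ≥0∞)+1) * ((4 * (m:ℝ≥0∞)))⁻¹)⁻¹ :=
        Finset.sum_le_sum_of_subset (Finset.range_subset_range.2 hu)
    _ = ENNReal.ofReal ((4*(m:ℝ)) * ((0:ℝ)+1)⁻¹) := by
        rw [Finset.sum_range_one, term_eq m hm 0]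
        norm_num
    _ ≤ ENNReal.ofReal (12 * m) := by
        apply ENNReal.ofReal_le_ofReal
        norm_num
        linarith

lemma sum_bound_log (m : ℕ) (hm : 1 ≤ m) (u : ℕ) (hu : u ≤ m) :
    ∑ j ∈ Finset.range u, (((j:ℝ≥0∞)+1) * ((4 * (m:ℝ≥0∞)))⁻¹)⁻¹
      ≤ ENNReal.ofReal (4 * m * (1 + Real.log m)) := by
  have hmR : (0:ℝ) < m := by exact_mod_cast hm
  calc ∑ j ∈ Finset.range u, (((j:ℝ≥0∞)+1) * ((4 * (m:ℝ≥0∞)))⁻¹)⁻¹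
      = ∑ j ∈ Finset.range u, ENNReal.ofReal ((4*(m:ℝ)) * ((j:ℝ)+1)⁻¹) :=
        Finset.sum_congr rfl fun j _ => term_eq m hm j
    _ = ENNReal.ofReal (∑ j ∈ Finset.range u, (4*(m:ℝ)) * ((j:ℝ)+1)⁻¹) :=
        (ENNReal.ofReal_sum_of_nonneg fun j _ => by positivity).symm
    _ ≤ ENNReal.ofReal (4 * m * (1 + Real.log m)) := by
        apply ENNReal.ofReal_le_ofReal
        rw [← Finset.mul_sum]
        apply mul_le_mul_of_nonneg_left _ (by positivity)
        calc ∑ j ∈ Finset.range u, ((j:ℝ)+1)⁻¹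
            ≤ ∑ j ∈ Finset.range m, ((j:ℝ)+1)⁻¹ := by
              apply Finset.sum_le_sum_of_subset_of_nonneg (Finset.range_subset_range.2 hu)
              intro j _ _
              positivity
          _ = (harmonic m : ℝ) := by rw [harmonic]; push_cast; rfl
          _ ≤ 1 + Real.log m := harmonic_le_one_add_log m

/-- For the dynamic vertex cover problem, the (1+1) EA with the edge-based
representation and fitness `f_e`, started from a maximal matching of the old instance, finds a
maximal matching of the new instance — inducing a 2-approximate vertex cover — in expected
time `O(m)` after a dynamic addition of an edge, and in expected time `O(m log m)` after a
dynamic deletion of an edge. -/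
theorem stmt_11 :
    ∃ c : ℝ, 0 < c ∧ ∃ m₀ : ℕ,
      ∀ (V : Type) (_ : Fintype V) (_ : DecidableEq V)
        (G G' : SimpleGraph V) (_ : DecidableRel G.Adj) (_ : DecidableRel G'.Adj)
        (e : Sym2 V) (x₀ : G'.edgeFinset → Bool),
        m₀ ≤ G'.edgeFinset.card →
          ((G'.edgeFinset = insert e G.edgeFinset ∧ e ∉ G.edgeFinset ∧
              IsMaximalMatchingOf G (chosenE G' x₀) →
            hitTime (eaKernel pmutEAg fun x z => fVC G' z ≤ fVC G' x)
                (fun x => IsMaximalMatchingOf G' (chosenE G' x)) x₀ ≤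
              ENNReal.ofReal (c * G'.edgeFinset.card)) ∧
           (G.edgeFinset = insert e G'.edgeFinset ∧ e ∉ G'.edgeFinset ∧
              (∃ M : Finset (Sym2 V), IsMaximalMatchingOf G M ∧ chosenE G' x₀ = M.erase e) →
            hitTime (eaKernel pmutEAg fun x z => fVC G' z ≤ fVC G' x)
                (fun x => IsMaximalMatchingOf G' (chosenE G' x)) x₀ ≤
              ENNReal.ofReal
                (c * G'.edgeFinset.card * Real.log (G'.edgeFinset.card : ℝ))) ∧
           (∀ x : G'.edgeFinset → Bool, IsMaximalMatchingOf G' (chosenE G' x) →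
              IsVertexCover G' (coverSet G' x) ∧
                ∀ C : Finset V, IsVertexCover G' C →
                  (coverSet G' x).card ≤ 2 * C.card)) := by
  refine ⟨12, by norm_num, 3, ?_⟩
  intro V instF instD G G' instG instG' e x₀ hm
  have hm1 : 1 ≤ G'.edgeFinset.card := by omega
  refine ⟨?_, ?_, ?_⟩
  · rintro ⟨hins, hnot, hmm⟩
    have hmatch : IsMatchingSet (chosenE G' x₀) := hmm.2.1
    have huncov : uncovN G' x₀ ≤ 1 := by
      rw [uncovN]
      have hsub : (G'.edgeFinset.filter fun e' => ¬∃ v ∈ coverSet G' x₀, v ∈ e')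
          ⊆ ({e} : Finset (Sym2 V)) := by
        intro e'' he''
        rw [Finset.mem_filter] at he''
        rw [Finset.mem_singleton]
        have he2 : e'' ∈ insert e G.edgeFinset := hins ▸ he''.1
        rcases Finset.mem_insert.1 he2 with h | h
        · exact h
        · exfalso
          obtain ⟨e', he', v, hv, hv'⟩ := hmm.2.2 e'' h
          exact he''.2 ⟨v, (mem_coverSet x₀ v).2 ⟨e', he', hv'⟩, hv⟩
      calc _ ≤ ({e} : Finset (Sym2 V)).card := Finset.card_le_card hsub
        _ = 1 := Finset.card_singleton e
    refine le_trans (main_bound G' hm1 x₀ hmatch) ?_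
    exact sum_bound_one _ hm1 _ huncov
  · rintro ⟨hins, hnot, M, hM, hch⟩
    have hmatch : IsMatchingSet (chosenE G' x₀) := by
      rw [hch]
      exact matching_subset hM.2.1 (Finset.erase_subset _ _)
    refine le_trans (main_bound G' hm1 x₀ hmatch) ?_
    refine le_trans (sum_bound_log _ hm1 _ (uncovN_le x₀)) ?_
    apply ENNReal.ofReal_le_ofReal
    set mR : ℝ := (G'.edgeFinset.card : ℝ) with hmR
    have hm3 : (3:ℝ) ≤ mR := by rw [hmR]; exact_mod_cast hm
    have hlog : 1 ≤ Real.log mR := by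
      have h3 : (1:ℝ) < Real.log 3 := by
        rw [Real.lt_log_iff_exp_lt (by norm_num)]
        have := Real.exp_one_lt_d9
        linarith
      have h4 : Real.log 3 ≤ Real.log mR := Real.log_le_log (by norm_num) hm3
      linarith
    nlinarith [mul_le_mul_of_nonneg_left hlog (show (0:ℝ) ≤ 8*mR by nlinarith)]
  · intro x hx
    exact two_approx x hx
end
end

section
/- For the dynamic makespan scheduling problem on two machines in the adversary model with processing times p_i ∈ [L, U] and R = U/L, if the current solution has discrepancy at most U and the adversary then changes the processing time of one job (to a new value in [L, U]), both RLS and the (1+1) EA recover a solution with discrepancy at most U in expected time O(min{R, n}). -/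
open scoped ENNReal
open Classical

noncomputable section

/-- Survival probability for a time-inhomogeneous Markov chain: `surviveT K A t s x` is the
probability that the chain with time-dependent kernel `K`, being in state `x` at time `s`,
does not visit the time-dependent target `A` during the time steps `s, s+1, …, s+t`. -/
def surviveT {S : Type*} (K : ℕ → S → S → ℝ≥0∞) (A : ℕ → S → Prop) :
    ℕ → ℕ → S → ℝ≥0∞
  | 0, s, x => if A s x then 0 else 1
  | t + 1, s, x => if A s x then 0 else ∑' y, K s x y * surviveT K A t (s + 1) y

/-- Expected hitting time of the time-dependent target `A` for the time-inhomogeneous Markov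
chain with kernel `K` started at `x` at time `0`. -/
def hitTimeT {S : Type*} (K : ℕ → S → S → ℝ≥0∞) (A : ℕ → S → Prop) (x : S) : ℝ≥0∞ :=
  ∑' t, surviveT K A t 0 x

/-- The load of machine `M₂` (the jobs `i` with `x i = true`). -/
def load {n : ℕ} (p : Fin n → ℝ) (x : Fin n → Bool) : ℝ := ∑ i, if x i then p i else 0

/-- The load of machine `M₁` (the jobs `i` with `x i = false`). -/
def loadC {n : ℕ} (p : Fin n → ℝ) (x : Fin n → Bool) : ℝ := ∑ i, if x i then 0 else p i

/-- The makespan of the schedule `x` for processing times `p`. -/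
def mkspan {n : ℕ} (p : Fin n → ℝ) (x : Fin n → Bool) : ℝ := max (load p x) (loadC p x)

/-- The discrepancy of the schedule `x` for processing times `p`. -/
def disc {n : ℕ} (p : Fin n → ℝ) (x : Fin n → Bool) : ℝ := |load p x - loadC p x|

/-- Joint kernel of an algorithm with mutation operator `pm` minimizing the makespan, together
with an adaptive adversary `σ` that in each iteration replaces the current processing times
(depending on the time and the current state) before the offspring is evaluated. -/
def advKernel (n : ℕ) (σ : ℕ → (Fin n → ℝ) → (Fin n → Bool) → Fin n → ℝ)
    (pm : (Fin n → Bool) → (Fin n → Bool) → ℝ≥0∞) (t : ℕ)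
    (s s' : (Fin n → ℝ) × (Fin n → Bool)) : ℝ≥0∞ :=
  (if s'.1 = σ t s.1 s.2 then 1 else 0) *
    eaKernel pm (fun x z => mkspan s'.1 z ≤ mkspan s'.1 x) s.2 s'.2

/-- The adversary keeps all processing times in `[L, U]` and changes the processing time of at
most one job in each iteration. -/
def ValidAdversary (n : ℕ) (L U : ℝ) (σ : ℕ → (Fin n → ℝ) → (Fin n → Bool) → Fin n → ℝ) :
    Prop :=
  ∀ t (p : Fin n → ℝ) (x : Fin n → Bool),
    (∀ i, L ≤ σ t p x i ∧ σ t p x i ≤ U) ∧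
      (Finset.univ.filter fun i => σ t p x i ≠ p i).card ≤ 1

namespace Stmt14


open Finset

variable {S : Type*} [Fintype S]

lemma survive_of_mem (K : S → S → ℝ≥0∞) (A : S → Prop) (t : ℕ) (x : S) (h : A x) :
    survive K A t x = 0 := by cases t <;> simp [survive, h]

lemma hitTime_eq_zero (K : S → S → ℝ≥0∞) (A : S → Prop) (x : S) (h : A x) :
    hitTime K A x = 0 := by
  simp [hitTime, survive_of_mem K A _ x h]

lemma hitTime_le (K : S → S → ℝ≥0∞) (A I : S → Prop) (β : S → ℝ≥0∞)
    (hI : ∀ x y, I x → K x y ≠ 0 → I y)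
    (hstep : ∀ x, I x → ¬ A x → 1 + ∑' y, K x y * β y ≤ β x)
    (x₀ : S) (hx₀ : I x₀) : hitTime K A x₀ ≤ β x₀ := by
  have key : ∀ t x, I x → ∑ s ∈ Finset.range t, survive K A s x ≤ β x := by
    intro t
    induction t with
    | zero => intro x _; simp
    | succ t ih =>
      intro x hx
      by_cases hA : A x
      · simp [survive_of_mem K A _ x hA]
      · rw [Finset.sum_range_succ']
        have h0 : survive K A 0 x = 1 := by simp [survive, hA]
        have h1 : ∀ s, survive K A (s+1) x = ∑ y, K x y * survive K A s y := by
          intro s; simp [survive, hA, tsum_fintype]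
        calc (∑ s ∈ Finset.range t, survive K A (s+1) x) + survive K A 0 x
            = 1 + ∑ s ∈ Finset.range t, ∑ y, K x y * survive K A s y := by
              rw [h0]; simp only [h1]; ring
          _ = 1 + ∑ y, K x y * ∑ s ∈ Finset.range t, survive K A s y := by
              rw [Finset.sum_comm]; simp [Finset.mul_sum]
          _ ≤ 1 + ∑ y, K x y * β y := by
              refine add_le_add_right (Finset.sum_le_sum fun y _ => ?_) 1
              by_cases hK : K x y = 0
              · simp [hK]
              · exact mul_le_mul_right (ih y (hI x y hx hK)) _
          _ ≤ β x := by
              have := hstep x hx hA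
              rwa [tsum_fintype] at this
  rw [hitTime, ENNReal.tsum_eq_iSup_nat]
  exact iSup_le fun t => key t x₀ hx₀

lemma eaKernel_sum_mul (pm : S → S → ℝ≥0∞) (acc : S → S → Prop) (x : S) (β : S → ℝ≥0∞) :
    ∑' y, eaKernel pm acc x y * β y = ∑ z, pm x z * β (if acc x z then z else x) := by
  rw [tsum_fintype]
  have : ∀ y, eaKernel pm acc x y * β y
      = ∑ z, (if (if acc x z then z else x) = y then pm x z * β y else 0) := by
    intro y
    rw [eaKernel, tsum_fintype, Finset.sum_mul]
    exact Finset.sum_congr rfl fun z _ => by split <;> simp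
  simp only [this]
  rw [Finset.sum_comm]
  exact Finset.sum_congr rfl fun z _ => by rw [Finset.sum_ite_eq] ; simp

lemma eaKernel_sum (pm : S → S → ℝ≥0∞) (acc : S → S → Prop) (x : S) :
    ∑' y, eaKernel pm acc x y = ∑ z, pm x z := by
  have := eaKernel_sum_mul pm acc x (fun _ => 1)
  simpa using this

lemma eaKernel_ne_zero (pm : S → S → ℝ≥0∞) (acc : S → S → Prop) (x y : S)
    (h : eaKernel pm acc x y ≠ 0) : y = x ∨ acc x y := by
  rw [eaKernel, tsum_fintype] at h
  obtain ⟨z, _, hz⟩ := Finset.exists_ne_zero_of_sum_ne_zero h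
  by_cases hacc : acc x z
  · rw [if_pos hacc] at hz
    by_cases hzy : z = y
    · subst hzy; exact Or.inr hacc
    · simp [hzy] at hz
  · rw [if_neg hacc] at hz
    by_cases hxy : x = y
    · exact Or.inl hxy.symm
    · simp [hxy] at hz

lemma step_bound {ι : Type*} (pm : S → S → ℝ≥0∞) (acc : S → S → Prop) (β : S → ℝ≥0∞) (x : S)
    (hmass : ∑ z, pm x z ≤ 1)
    (hout : ∀ z, β (if acc x z then z else x) ≤ β x)
    (J : Finset ι) (t : ι → S) (hinj : Set.InjOn t J)
    (r : ι → ℝ≥0∞)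
    (hr : ∀ i ∈ J, β (if acc x (t i) then t i else x) + r i ≤ β x)
    (hsum : 1 ≤ ∑ i ∈ J, pm x (t i) * r i) :
    1 + ∑' y, eaKernel pm acc x y * β y ≤ β x := by
  rw [eaKernel_sum_mul]
  set out : S → S := fun z => if acc x z then z else x with hout_def
  set T : Finset S := J.image t with hT
  have hsplit : ∀ g : S → ℝ≥0∞, ∑ z, g z = ∑ z ∈ T, g z + ∑ z ∈ Finset.univ \ T, g z := by
    intro g
    rw [add_comm, Finset.sum_sdiff (Finset.subset_univ T)]
  have himg : ∀ g : S → ℝ≥0∞, ∑ z ∈ T, g z = ∑ i ∈ J, g (t i) := by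
    intro g; rw [hT, Finset.sum_image (fun a ha b hb => hinj ha hb)]
  calc 1 + ∑ z, pm x z * β (out z)
      = (1 + ∑ i ∈ J, pm x (t i) * β (out (t i))) + ∑ z ∈ Finset.univ \ T, pm x z * β (out z) := by
        rw [hsplit (fun z => pm x z * β (out z)), himg, add_assoc]
    _ ≤ (∑ i ∈ J, pm x (t i) * r i + ∑ i ∈ J, pm x (t i) * β (out (t i)))
          + ∑ z ∈ Finset.univ \ T, pm x z * β x := by
        refine add_le_add (add_le_add hsum le_rfl)
          (Finset.sum_le_sum fun z _ => mul_le_mul_right (hout z) _)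
    _ = ∑ i ∈ J, pm x (t i) * (β (out (t i)) + r i) + ∑ z ∈ Finset.univ \ T, pm x z * β x := by
        rw [← Finset.sum_add_distrib]
        congr 1
        exact Finset.sum_congr rfl fun i _ => by rw [mul_add]; ring
    _ ≤ ∑ i ∈ J, pm x (t i) * β x + ∑ z ∈ Finset.univ \ T, pm x z * β x := by
        refine add_le_add_left (Finset.sum_le_sum fun i hi => ?_) _
        exact mul_le_mul_right (hr i hi) _
    _ = (∑ z, pm x z) * β x := by
        rw [Finset.sum_mul, hsplit (fun z => pm x z * β x), ← himg (fun z => pm x z * β x)]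
    _ ≤ 1 * β x := by gcongr
    _ = β x := one_mul _


open Finset

variable {n : ℕ}

lemma hamming_flip (x : Fin n → Bool) (i : Fin n) :
    hammingDist x (Function.update x i (!(x i))) = 1 := by
  rw [hammingDist]
  have : (Finset.univ.filter fun j => x j ≠ Function.update x i (!(x i)) j) = {i} := by
    ext j
    simp only [Finset.mem_filter, Finset.mem_univ, true_and, Finset.mem_singleton]
    constructor
    · intro hj
      by_contra hji
      rw [Function.update_of_ne hji] at hj
      exact hj rfl
    · intro hj; subst hj
      rw [Function.update_self]
      cases x j <;> simp
  rw [this, Finset.card_singleton]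

lemma dist_one_subset (x : Fin n → Bool) :
    (Finset.univ.filter fun z => hammingDist x z = 1)
      ⊆ Finset.univ.image (fun i => Function.update x i (!(x i))) := by
  intro z hz
  rw [Finset.mem_filter] at hz
  obtain ⟨i, hi⟩ := Finset.card_eq_one.mp hz.2
  rw [Finset.mem_image]
  refine ⟨i, Finset.mem_univ i, ?_⟩
  have hmem : ∀ j, (x j ≠ z j) ↔ j ∈ ({i} : Finset (Fin n)) := by
    intro j
    rw [← hi]
    simp
  funext j
  by_cases hj : j = i
  · subst hj
    have hne : x j ≠ z j := (hmem j).mpr (Finset.mem_singleton_self j)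
    rw [Function.update_self]
    revert hne
    cases x j <;> cases z j <;> simp
  · rw [Function.update_of_ne hj]
    have : ¬ (x j ≠ z j) := fun h => hj (Finset.mem_singleton.mp ((hmem j).mp h))
    exact (not_ne_iff.mp this)

lemma rls_mass (hn : 1 ≤ n) (x : Fin n → Bool) : ∑ z, pmutRLS n x z ≤ 1 := by
  have h1 : ∑ z, pmutRLS n x z
      = ((Finset.univ.filter fun z => hammingDist x z = 1).card : ℝ≥0∞) * (n : ℝ≥0∞)⁻¹ := by
    simp only [pmutRLS]
    rw [← Finset.sum_filter, Finset.sum_const, nsmul_eq_mul]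
  rw [h1]
  have hcard : ((Finset.univ.filter fun z => hammingDist x z = 1).card : ℝ≥0∞) ≤ n := by
    have h2 : (Finset.univ.filter fun z => hammingDist x z = 1).card ≤ n := by
      refine (Finset.card_le_card (dist_one_subset x)).trans (Finset.card_image_le.trans ?_)
      simp
    exact_mod_cast h2
  calc ((Finset.univ.filter fun z => hammingDist x z = 1).card : ℝ≥0∞) * (n : ℝ≥0∞)⁻¹
      ≤ (n : ℝ≥0∞) * (n : ℝ≥0∞)⁻¹ := mul_le_mul_left hcard _
    _ = 1 := ENNReal.mul_inv_cancel (by exact_mod_cast (by omega : n ≠ 0)) (ENNReal.natCast_ne_top n)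

lemma pmutEA_eq_prod (x z : Fin n → Bool) :
    pmutEA n x z = ∏ i, (if z i = x i then 1 - (n:ℝ≥0∞)⁻¹ else (n:ℝ≥0∞)⁻¹) := by
  rw [pmutEA]
  rw [← Finset.prod_filter_mul_prod_filter_not Finset.univ (fun i => z i = x i)]
  have h1 : ∏ i ∈ Finset.univ.filter (fun i => z i = x i),
      (if z i = x i then 1 - (n:ℝ≥0∞)⁻¹ else (n:ℝ≥0∞)⁻¹) = (1 - (n:ℝ≥0∞)⁻¹) ^ (n - hammingDist x z) := by
    rw [Finset.prod_congr rfl (fun i hi => if_pos (Finset.mem_filter.mp hi).2),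
      Finset.prod_const]
    congr 1
    have hsplit := Finset.card_filter_add_card_filter_not (s := Finset.univ)
      (p := fun i : Fin n => z i = x i)
    have hd : (Finset.univ.filter fun i => ¬ z i = x i).card = hammingDist x z := by
      rw [hammingDist]
      congr 1
      apply Finset.filter_congr
      intro j _
      simp [ne_comm, eq_comm]
    simp only [Finset.card_univ, Fintype.card_fin] at hsplit
    omega
  have h2 : ∏ i ∈ Finset.univ.filter (fun i => ¬ z i = x i),
      (if z i = x i then 1 - (n:ℝ≥0∞)⁻¹ else (n:ℝ≥0∞)⁻¹) = ((n:ℝ≥0∞)⁻¹) ^ (hammingDist x z) := by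
    rw [Finset.prod_congr rfl (fun i hi => if_neg (Finset.mem_filter.mp hi).2),
      Finset.prod_const]
    congr 1
    rw [hammingDist]
    congr 1
    apply Finset.filter_congr
    intro j _
    simp [ne_comm, eq_comm]
  rw [h1, h2, mul_comm]

lemma ea_mass (hn : 1 ≤ n) (x : Fin n → Bool) : ∑ z, pmutEA n x z = 1 := by
  simp only [pmutEA_eq_prod]
  have := Finset.prod_univ_sum (fun _ : Fin n => (Finset.univ : Finset Bool))
    (fun i b => if b = x i then 1 - (n:ℝ≥0∞)⁻¹ else (n:ℝ≥0∞)⁻¹)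
  rw [Fintype.piFinset_univ] at this
  rw [← this]
  have hb : ∀ i : Fin n, ∑ b : Bool, (if b = x i then 1 - (n:ℝ≥0∞)⁻¹ else (n:ℝ≥0∞)⁻¹) = 1 := by
    intro i
    have hinv : (n : ℝ≥0∞)⁻¹ ≤ 1 := by
      rw [ENNReal.inv_le_one]
      exact_mod_cast hn
    cases hxi : x i <;> simp [Finset.sum_ite_eq, hxi] <;>
      [rw [add_comm, tsub_add_cancel_of_le hinv]; rw [tsub_add_cancel_of_le hinv]]
  rw [Finset.prod_congr rfl (fun i _ => hb i), Finset.prod_const_one]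

lemma real_pow_bound (n : ℕ) (hn : 1 ≤ n) : (1/3 : ℝ) ≤ (1 - 1/(n:ℝ))^(n-1) := by
  rcases eq_or_lt_of_le hn with h1 | h2
  · rw [← h1]; norm_num
  · have hn2 : 2 ≤ n := h2
    set m : ℕ := n - 1 with hm
    have hm1 : 1 ≤ m := by omega
    have hmn : (n : ℝ) = (m : ℝ) + 1 := by
      rw [hm]; push_cast [Nat.cast_sub (by omega : 1 ≤ n)]; ring
    have hmpos : (0:ℝ) < m := by exact_mod_cast hm1
    have hnpos : (0:ℝ) < n := by positivity
    have hexp : Real.exp (-(1/(m:ℝ))) ≤ 1 - 1/(n:ℝ) := by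
      have h3 : 1 + 1/(m:ℝ) ≤ Real.exp (1/(m:ℝ)) := by
        have := Real.add_one_le_exp (1/(m:ℝ)); linarith
      have h4 : Real.exp (-(1/(m:ℝ))) = (Real.exp (1/(m:ℝ)))⁻¹ := by
        rw [Real.exp_neg]
      rw [h4]
      have h5 : (Real.exp (1/(m:ℝ)))⁻¹ ≤ (1 + 1/(m:ℝ))⁻¹ := by
        apply inv_anti₀ _ h3
        positivity
      refine h5.trans ?_
      have h6 : (1 + 1/(m:ℝ)) = (n:ℝ)/(m:ℝ) := by
        field_simp [hmn]
        linarith [hmn]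
      rw [h6]
      have h7 : ((n:ℝ)/(m:ℝ))⁻¹ = (m:ℝ)/(n:ℝ) := by
        rw [inv_div]
      rw [h7]
      have : (m:ℝ)/(n:ℝ) = 1 - 1/(n:ℝ) := by
        field_simp [hmn]
        linarith [hmn]
      linarith [this.le, this.ge]
    have hpow : Real.exp (-(1/(m:ℝ))) ^ m ≤ (1 - 1/(n:ℝ)) ^ m := by
      apply pow_le_pow_left₀ (Real.exp_nonneg _) hexp
    have hexpm : Real.exp (-(1/(m:ℝ))) ^ m = Real.exp (-1) := by
      rw [← Real.exp_nat_mul]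
      congr 1
      field_simp
    have h13 : (1/3:ℝ) ≤ Real.exp (-1) := by
      rw [Real.exp_neg, one_div]
      apply inv_anti₀ (Real.exp_pos 1)
      have := Real.exp_one_lt_d9
      linarith
    calc (1/3:ℝ) ≤ Real.exp (-1) := h13
      _ = Real.exp (-(1/(m:ℝ))) ^ m := hexpm.symm
      _ ≤ (1 - 1/(n:ℝ)) ^ m := hpow

lemma inv_nat_eq_ofReal (n : ℕ) (hn : 1 ≤ n) : ((n:ℝ≥0∞))⁻¹ = ENNReal.ofReal (1/(n:ℝ)) := by
  have h : (n:ℝ≥0∞) = ENNReal.ofReal (n:ℝ) := (ENNReal.ofReal_natCast n).symm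
  rw [h, ← ENNReal.ofReal_inv_of_pos (by exact_mod_cast hn : (0:ℝ) < n), one_div]

lemma one_sub_inv_eq (n : ℕ) (hn : 1 ≤ n) :
    (1 - (n:ℝ≥0∞)⁻¹) = ENNReal.ofReal (1 - 1/(n:ℝ)) := by
  rw [inv_nat_eq_ofReal n hn, ← ENNReal.ofReal_one, ← ENNReal.ofReal_sub]
  positivity

lemma rls_flip (hn : 1 ≤ n) (x : Fin n → Bool) (i : Fin n) :
    ENNReal.ofReal (1/(3*(n:ℝ))) ≤ pmutRLS n x (Function.update x i (!(x i))) := by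
  rw [pmutRLS, if_pos (hamming_flip x i), inv_nat_eq_ofReal n hn]
  apply ENNReal.ofReal_le_ofReal
  have hnpos : (0:ℝ) < n := by exact_mod_cast hn
  rw [div_le_div_iff₀ (by positivity) hnpos]
  nlinarith

lemma ea_flip (hn : 1 ≤ n) (x : Fin n → Bool) (i : Fin n) :
    ENNReal.ofReal (1/(3*(n:ℝ))) ≤ pmutEA n x (Function.update x i (!(x i))) := by
  rw [pmutEA, hamming_flip x i, pow_one, one_sub_inv_eq n hn, inv_nat_eq_ofReal n hn,
    ← ENNReal.ofReal_pow (by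
      have hnpos : (0:ℝ) < n := by exact_mod_cast hn
      have : 1/(n:ℝ) ≤ 1 := by
        rw [div_le_one hnpos]; exact_mod_cast hn
      linarith), ← ENNReal.ofReal_mul (by positivity)]
  apply ENNReal.ofReal_le_ofReal
  have hnpos : (0:ℝ) < n := by exact_mod_cast hn
  have hb := real_pow_bound n hn
  calc 1/(3*(n:ℝ)) = (1/(n:ℝ)) * (1/3) := by ring
    _ ≤ (1/(n:ℝ)) * (1 - 1/(n:ℝ))^(n-1) := by
        apply mul_le_mul_of_nonneg_left hb (by positivity)


open Finset

variable {n : ℕ}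

def diffl (p : Fin n → ℝ) (x : Fin n → Bool) : ℝ := ∑ i, (if x i then p i else -p i)

lemma load_sub_loadC (p : Fin n → ℝ) (x : Fin n → Bool) :
    load p x - loadC p x = diffl p x := by
  rw [load, loadC, diffl, ← Finset.sum_sub_distrib]
  exact Finset.sum_congr rfl fun i _ => by split <;> ring

lemma load_add_loadC (p : Fin n → ℝ) (x : Fin n → Bool) :
    load p x + loadC p x = ∑ i, p i := by
  rw [load, loadC, ← Finset.sum_add_distrib]
  exact Finset.sum_congr rfl fun i _ => by split <;> ring

lemma disc_eq (p : Fin n → ℝ) (x : Fin n → Bool) : disc p x = |diffl p x| := by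
  rw [disc, load_sub_loadC]

lemma mkspan_eq (p : Fin n → ℝ) (x : Fin n → Bool) :
    mkspan p x = ((∑ i, p i) + |diffl p x|) / 2 := by
  rw [mkspan, ← load_add_loadC p x, ← load_sub_loadC p x]
  rcases le_total (load p x) (loadC p x) with h | h
  · rw [max_eq_right h, abs_of_nonpos (by linarith)]; ring
  · rw [max_eq_left h, abs_of_nonneg (by linarith)]; ring

lemma mkspan_le_iff (p : Fin n → ℝ) (x z : Fin n → Bool) :
    mkspan p z ≤ mkspan p x ↔ |diffl p z| ≤ |diffl p x| := by
  rw [mkspan_eq, mkspan_eq]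
  constructor <;> intro h <;> linarith

lemma diffl_update (p : Fin n → ℝ) (x : Fin n → Bool) (i : Fin n) :
    diffl p (Function.update x i (!(x i))) = diffl p x - 2 * (if x i then p i else -p i) := by
  rw [diffl, diffl]
  have h : ∀ j, (if (Function.update x i (!(x i))) j then p j else -p j)
      = (if x j then p j else -p j) + (if j = i then -2 * (if x i then p i else -p i) else 0) := by
    intro j
    by_cases hj : j = i
    · subst hj
      rw [Function.update_self]
      cases x j <;> simp <;> ring
    · rw [Function.update_of_ne hj, if_neg hj, add_zero]
  simp only [h]
  rw [Finset.sum_add_distrib, Finset.sum_ite_eq' Finset.univ i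
    (fun _ => -2 * (if x i then p i else -p i))]
  simp
  split <;> ring

def fullerSet (p : Fin n → ℝ) (x : Fin n → Bool) : Finset (Fin n) :=
  if 0 < diffl p x then Finset.univ.filter (fun j => x j = true)
  else Finset.univ.filter (fun j => x j = false)

lemma load_eq_filter (p : Fin n → ℝ) (x : Fin n → Bool) :
    load p x = ∑ j ∈ Finset.univ.filter (fun j => x j = true), p j := by
  rw [load, Finset.sum_filter]

lemma loadC_eq_filter (p : Fin n → ℝ) (x : Fin n → Bool) :
    loadC p x = ∑ j ∈ Finset.univ.filter (fun j => x j = false), p j := by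
  rw [loadC, Finset.sum_filter]
  exact Finset.sum_congr rfl fun i _ => by cases x i <;> simp

lemma sum_fullerSet (p : Fin n → ℝ) (x : Fin n → Bool) (hd : diffl p x ≠ 0) :
    ∑ j ∈ fullerSet p x, p j = ((∑ i, p i) + |diffl p x|) / 2 := by
  have hload : load p x - loadC p x = diffl p x := load_sub_loadC p x
  have hsum : load p x + loadC p x = ∑ i, p i := load_add_loadC p x
  rw [fullerSet]
  by_cases h : 0 < diffl p x
  · rw [if_pos h, ← load_eq_filter, abs_of_pos h]; linarith
  · have hneg : diffl p x < 0 := lt_of_le_of_ne (not_lt.mp h) hd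
    rw [if_neg h, ← loadC_eq_filter, abs_of_neg hneg]; linarith

lemma fuller_flip (p : Fin n → ℝ) (x : Fin n → Bool) (i : Fin n)
    (hd : diffl p x ≠ 0) (hi : i ∈ fullerSet p x) :
    |diffl p (Function.update x i (!(x i)))| = |(|diffl p x|) - 2 * p i| := by
  rw [diffl_update]
  rw [fullerSet] at hi
  by_cases h : 0 < diffl p x
  · rw [if_pos h] at hi
    have hxi : x i = true := (Finset.mem_filter.mp hi).2
    rw [hxi, if_pos rfl, abs_of_pos h]
  · have hneg : diffl p x < 0 := lt_of_le_of_ne (not_lt.mp h) hd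
    rw [if_neg h] at hi
    have hxi : x i = false := (Finset.mem_filter.mp hi).2
    rw [hxi]
    simp only [Bool.false_eq_true, if_false, abs_of_neg hneg]
    rw [show diffl p x - 2 * -p i = -(-diffl p x - 2 * p i) by ring, abs_neg]

def bigSet (p : Fin n → ℝ) (U : ℝ) (x : Fin n → Bool) : Finset (Fin n) :=
  (fullerSet p x).filter (fun i => |diffl p x| - U ≤ 2 * p i)

def smallSet (p : Fin n → ℝ) (U : ℝ) (x : Fin n → Bool) : Finset (Fin n) :=
  (fullerSet p x).filter (fun i => ¬ (|diffl p x| - U ≤ 2 * p i))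

def phi (γ g : ℝ) : ℝ := 2 * γ * g / (γ + g)

lemma phi_nonneg {γ g : ℝ} (hγ : 0 < γ) (hg : 0 ≤ g) : 0 ≤ phi γ g := by
  rw [phi]; positivity

lemma phi_mono {γ g₁ g₂ : ℝ} (hγ : 0 < γ) (h1 : 0 ≤ g₁) (h12 : g₁ ≤ g₂) :
    phi γ g₁ ≤ phi γ g₂ := by
  rw [phi, phi, div_le_div_iff₀ (by linarith) (by linarith)]
  nlinarith [mul_nonneg (mul_nonneg hγ.le hγ.le) (sub_nonneg.mpr h12)]

lemma phi_le {γ g : ℝ} (hγ : 0 < γ) (hg : 0 ≤ g) : phi γ g ≤ 2 * γ := by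
  rw [phi, div_le_iff₀ (by linarith)]
  nlinarith

lemma phi_gain {γ g s : ℝ} (hγ : 0 < γ) (hs : 0 ≤ s) (h1 : 0 ≤ g - s) (h2 : g ≤ γ) :
    phi γ (g - s) + s / 2 ≤ phi γ g := by
  have hden1 : 0 < γ + g := by linarith
  have hden2 : 0 < γ + (g - s) := by linarith
  have hkey : phi γ g - phi γ (g - s) = 2 * γ ^ 2 * s / ((γ + g) * (γ + (g - s))) := by
    rw [phi, phi]
    field_simp
    ring
  have hge : 2 * γ ^ 2 * s / ((γ + g) * (γ + (g - s))) ≥ s / 2 := by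
    rw [ge_iff_le, div_le_div_iff₀ (by norm_num) (by positivity)]
    have e3 : (γ + g) * (γ + (g - s)) ≤ 4 * γ ^ 2 := by nlinarith
    nlinarith [mul_le_mul_of_nonneg_left e3 hs]
  linarith

def pot (U γ B0 α : ℝ) (p : Fin n → ℝ) (x : Fin n → Bool) : ℝ :=
  if |diffl p x| ≤ U then 0 else B0 + α * phi γ (|diffl p x| - U)

lemma pot_nonneg {U γ B0 α : ℝ} (hγ : 0 < γ) (hU : 0 ≤ U) (hB0 : 0 ≤ B0) (hα : 0 ≤ α)
    (p : Fin n → ℝ) (x : Fin n → Bool) : 0 ≤ pot U γ B0 α p x := by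
  rw [pot]
  split
  · exact le_rfl
  · next h =>
    push_neg at h
    exact add_nonneg hB0 (mul_nonneg hα (phi_nonneg hγ (by linarith)))

lemma pot_mono {U γ B0 α : ℝ} (hγ : 0 < γ) (hU : 0 ≤ U) (hB0 : 0 ≤ B0) (hα : 0 ≤ α)
    (p : Fin n → ℝ) {x z : Fin n → Bool} (h : |diffl p z| ≤ |diffl p x|) :
    pot U γ B0 α p z ≤ pot U γ B0 α p x := by
  by_cases hz : |diffl p z| ≤ U
  · rw [show pot U γ B0 α p z = 0 from if_pos hz]
    exact pot_nonneg hγ hU hB0 hα p x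
  · push_neg at hz
    rw [show pot U γ B0 α p z = B0 + α * phi γ (|diffl p z| - U) from if_neg (not_le.mpr hz),
      show pot U γ B0 α p x = B0 + α * phi γ (|diffl p x| - U) from if_neg (by push_neg; linarith)]
    have hm := phi_mono hγ (by linarith : (0:ℝ) ≤ |diffl p z| - U)
      (by linarith : |diffl p z| - U ≤ |diffl p x| - U)
    nlinarith

lemma pot_le {U γ B0 α : ℝ} (hγ : 0 < γ) (hU : 0 ≤ U) (hB0 : 0 ≤ B0) (hα : 0 ≤ α)
    (p : Fin n → ℝ) (x : Fin n → Bool) : pot U γ B0 α p x ≤ B0 + α * (2 * γ) := by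
  rw [pot]
  split
  · positivity
  · next h =>
    push_neg at h
    have h2 := phi_le hγ (by linarith : (0:ℝ) ≤ |diffl p x| - U)
    nlinarith


lemma diffl_perturb {n : ℕ} {L U : ℝ} (hLU : L ≤ U) (p₀ p₁ : Fin n → ℝ)
    (h0 : ∀ i, L ≤ p₀ i ∧ p₀ i ≤ U) (h1 : ∀ i, L ≤ p₁ i ∧ p₁ i ≤ U)
    (hcard : (Finset.univ.filter fun i => p₁ i ≠ p₀ i).card ≤ 1) (x : Fin n → Bool) :
    |diffl p₁ x - diffl p₀ x| ≤ U - L := by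
  have hdiff : diffl p₁ x - diffl p₀ x
      = ∑ i, (if x i then p₁ i - p₀ i else -(p₁ i - p₀ i)) := by
    rw [diffl, diffl, ← Finset.sum_sub_distrib]
    exact Finset.sum_congr rfl fun i _ => by split <;> ring
  rw [hdiff]
  calc |∑ i, (if x i then p₁ i - p₀ i else -(p₁ i - p₀ i))|
      ≤ ∑ i, |if x i then p₁ i - p₀ i else -(p₁ i - p₀ i)| :=
        Finset.abs_sum_le_sum_abs _ _
    _ = ∑ i, |p₁ i - p₀ i| :=
        Finset.sum_congr rfl fun i _ => by split <;> first | rfl | exact abs_neg _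
    _ = ∑ i ∈ Finset.univ.filter (fun i => p₁ i ≠ p₀ i), |p₁ i - p₀ i| := by
        refine (Finset.sum_subset (Finset.filter_subset _ _) ?_).symm
        intro i _ hi
        rw [Finset.mem_filter] at hi
        push_neg at hi
        have : p₁ i = p₀ i := hi (Finset.mem_univ i)
        simp [this]
    _ ≤ (Finset.univ.filter (fun i => p₁ i ≠ p₀ i)).card • (U - L) := by
        apply Finset.sum_le_card_nsmul
        intro i _
        rw [abs_le]
        constructor
        · have := (h0 i).2; have := (h1 i).1; linarith
        · have := (h0 i).1; have := (h1 i).2; linarith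
    _ ≤ U - L := by
        rw [nsmul_eq_mul]
        have hc : ((Finset.univ.filter (fun i => p₁ i ≠ p₀ i)).card : ℝ) ≤ 1 := by
          exact_mod_cast hcard
        nlinarith

lemma main_bound {n : ℕ} (hn : 1 ≤ n) {L U : ℝ} (hL : 0 < L) (hLU : L < U)
    (p : Fin n → ℝ) (hp : ∀ i, L ≤ p i ∧ p i ≤ U)
    (pm : (Fin n → Bool) → (Fin n → Bool) → ℝ≥0∞)
    (hmass : ∀ x, ∑ z, pm x z ≤ 1)
    (hflip : ∀ (x : Fin n → Bool) (i : Fin n),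
      ENNReal.ofReal (1/(3*(n:ℝ))) ≤ pm x (Function.update x i (!(x i))))
    (B0 α : ℝ) (hB0 : 0 ≤ B0) (hα : 0 ≤ α)
    (hkey : ∀ x : Fin n → Bool, ¬ (|diffl p x| ≤ U) →
        3*(n:ℝ) ≤ B0 * ((bigSet p U x).card : ℝ) + α * ∑ i ∈ smallSet p U x, p i)
    (x₀ : Fin n → Bool) (hx₀ : disc p x₀ ≤ 2*U - L) :
    hitTime (eaKernel pm fun x z => mkspan p z ≤ mkspan p x) (fun x => disc p x ≤ U) x₀
      ≤ ENNReal.ofReal (B0 + α * (2*(U - L))) := by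
  have hγ : 0 < U - L := by linarith
  have hU : 0 < U := lt_trans hL hLU
  have hIk : ∀ x y, disc p x ≤ 2*U - L →
      eaKernel pm (fun x z => mkspan p z ≤ mkspan p x) x y ≠ 0 → disc p y ≤ 2*U - L := by
    intro x y hx hK
    rcases eaKernel_ne_zero pm _ x y hK with h | h
    · rwa [h]
    · have h2 := (mkspan_le_iff p x y).mp h
      rw [disc_eq] at hx ⊢
      linarith
  have hstep : ∀ x, disc p x ≤ 2*U - L → ¬ (disc p x ≤ U) →
      1 + ∑' y, eaKernel pm (fun x z => mkspan p z ≤ mkspan p x) x y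
          * ENNReal.ofReal (pot U (U-L) B0 α p y)
        ≤ ENNReal.ofReal (pot U (U-L) B0 α p x) := by
    intro x hIx hAx
    rw [disc_eq] at hAx hIx
    push_neg at hAx
    have hd0 : diffl p x ≠ 0 := by
      intro h
      rw [h, abs_zero] at hAx
      linarith
    have hgpos : 0 < |diffl p x| - U := by linarith
    have hdγ : |diffl p x| - U ≤ U - L := by linarith
    have hpotx : pot U (U-L) B0 α p x = B0 + α * phi (U-L) (|diffl p x| - U) :=
      if_neg (not_le.mpr hAx)
    have hflip_disc : ∀ i ∈ fullerSet p x,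
        |diffl p (Function.update x i (!(x i)))| = |(|diffl p x|) - 2 * p i| :=
      fun i hi => fuller_flip p x i hd0 hi
    have haccept : ∀ i ∈ fullerSet p x,
        mkspan p (Function.update x i (!(x i))) ≤ mkspan p x := by
      intro i hi
      rw [mkspan_le_iff, hflip_disc i hi, abs_le]
      constructor
      · have := (hp i).2; linarith
      · have := (hp i).1; linarith
    refine step_bound pm _ (fun z => ENNReal.ofReal (pot U (U-L) B0 α p z)) x (hmass x)
      ?_ (fullerSet p x) (fun i => Function.update x i (!(x i))) ?_
      (fun i => ENNReal.ofReal (if |diffl p x| - U ≤ 2 * p i then B0 else α * p i)) ?_ ?_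
    · -- hout
      intro z
      apply ENNReal.ofReal_le_ofReal
      split
      · next h => exact pot_mono hγ hU.le hB0 hα p ((mkspan_le_iff p x z).mp h)
      · exact le_rfl
    · -- hinj
      intro i _ j _ hij
      by_contra hne
      have h1 : Function.update x i (!(x i)) i = Function.update x j (!(x j)) i :=
        congrFun hij i
      rw [Function.update_self, Function.update_of_ne hne] at h1
      cases hxi : x i <;> rw [hxi] at h1 <;> simp at h1
    · -- hr
      intro i hi
      rw [if_pos (haccept i hi)]
      have hpi := hp i
      by_cases hbig : |diffl p x| - U ≤ 2 * p i
      · rw [if_pos hbig]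
        have htar : |diffl p (Function.update x i (!(x i)))| ≤ U := by
          rw [hflip_disc i hi, abs_le]
          exact ⟨by linarith, by linarith⟩
        rw [show pot U (U-L) B0 α p (Function.update x i (!(x i))) = 0 from if_pos htar,
          ENNReal.ofReal_zero, zero_add]
        apply ENNReal.ofReal_le_ofReal
        rw [hpotx]
        have := phi_nonneg hγ (le_of_lt hgpos)
        nlinarith
      · rw [if_neg hbig]
        push_neg at hbig
        have hdn : |diffl p (Function.update x i (!(x i)))| = |diffl p x| - 2 * p i := by
          rw [hflip_disc i hi, abs_of_pos (by linarith)]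
        have hnt : ¬ (|diffl p (Function.update x i (!(x i)))| ≤ U) := by
          rw [hdn]; push_neg; linarith
        rw [show pot U (U-L) B0 α p (Function.update x i (!(x i)))
            = B0 + α * phi (U-L) (|diffl p x| - 2 * p i - U) from by
          rw [pot, if_neg hnt, hdn]]
        rw [← ENNReal.ofReal_add
          (add_nonneg hB0 (mul_nonneg hα (phi_nonneg hγ (by linarith))))
          (mul_nonneg hα (by linarith))]
        apply ENNReal.ofReal_le_ofReal
        rw [hpotx]
        have hgain := phi_gain (γ := U - L) (g := |diffl p x| - U) (s := 2 * p i) hγ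
          (by linarith) (by linarith) hdγ
        have harg : |diffl p x| - 2 * p i - U = |diffl p x| - U - 2 * p i := by ring
        rw [harg]
        nlinarith
    · -- hsum
      have hrr_nonneg : ∀ i ∈ fullerSet p x,
          0 ≤ (if |diffl p x| - U ≤ 2 * p i then B0 else α * p i) := by
        intro i _
        split
        · exact hB0
        · exact mul_nonneg hα (by linarith [(hp i).1])
      have hsplit : ∑ i ∈ fullerSet p x, (if |diffl p x| - U ≤ 2 * p i then B0 else α * p i)
          = B0 * ((bigSet p U x).card : ℝ) + α * ∑ i ∈ smallSet p U x, p i := by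
        rw [Finset.sum_ite, Finset.sum_const, nsmul_eq_mul, ← Finset.mul_sum]
        rw [bigSet, smallSet]
        ring
      have h3n : (3:ℝ)*(n:ℝ)
          ≤ ∑ i ∈ fullerSet p x, (if |diffl p x| - U ≤ 2 * p i then B0 else α * p i) := by
        rw [hsplit]
        exact hkey x (not_le.mpr hAx)
      have hnpos : (0:ℝ) < n := by exact_mod_cast hn
      calc (1:ℝ≥0∞) = ENNReal.ofReal ((1/(3*(n:ℝ))) * (3*(n:ℝ))) := by
            rw [one_div, inv_mul_cancel₀ (by positivity)]
            simp
        _ ≤ ENNReal.ofReal ((1/(3*(n:ℝ)))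
              * ∑ i ∈ fullerSet p x, (if |diffl p x| - U ≤ 2 * p i then B0 else α * p i)) := by
            apply ENNReal.ofReal_le_ofReal
            apply mul_le_mul_of_nonneg_left h3n (by positivity)
        _ = ∑ i ∈ fullerSet p x, ENNReal.ofReal ((1/(3*(n:ℝ)))
              * (if |diffl p x| - U ≤ 2 * p i then B0 else α * p i)) := by
            rw [Finset.mul_sum]
            exact ENNReal.ofReal_sum_of_nonneg fun i hi =>
              mul_nonneg (by positivity) (hrr_nonneg i hi)
        _ ≤ ∑ i ∈ fullerSet p x, pm x (Function.update x i (!(x i)))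
              * ENNReal.ofReal (if |diffl p x| - U ≤ 2 * p i then B0 else α * p i) := by
            refine Finset.sum_le_sum fun i hi => ?_
            rw [ENNReal.ofReal_mul (by positivity)]
            exact mul_le_mul_left (hflip x i) _
  have hmain := hitTime_le (eaKernel pm (fun x z => mkspan p z ≤ mkspan p x))
    (fun x => disc p x ≤ U) (fun x => disc p x ≤ 2*U - L)
    (fun x => ENNReal.ofReal (pot U (U-L) B0 α p x)) hIk hstep x₀ hx₀
  refine hmain.trans (ENNReal.ofReal_le_ofReal ?_)
  exact pot_le hγ hU.le hB0 hα p x₀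

lemma key_facts {n : ℕ} {L U : ℝ} (hL : 0 < L) (hU : 0 < U)
    (p : Fin n → ℝ) (hp : ∀ i, L ≤ p i ∧ p i ≤ U)
    (x : Fin n → Bool) (hAx : ¬ (|diffl p x| ≤ U)) :
    (∑ i ∈ bigSet p U x, p i) + (∑ i ∈ smallSet p U x, p i) = ∑ j ∈ fullerSet p x, p j
    ∧ U < ∑ j ∈ fullerSet p x, p j
    ∧ (n:ℝ) * L / 2 ≤ ∑ j ∈ fullerSet p x, p j
    ∧ (∑ i ∈ bigSet p U x, p i) ≤ ((bigSet p U x).card : ℝ) * U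
    ∧ 0 ≤ ∑ i ∈ smallSet p U x, p i := by
  push_neg at hAx
  have hd0 : diffl p x ≠ 0 := by
    intro h; rw [h, abs_zero] at hAx; linarith
  have hF := sum_fullerSet p x hd0
  have hdS : |diffl p x| ≤ ∑ i, p i := by
    refine (Finset.abs_sum_le_sum_abs _ _).trans ?_
    refine le_of_eq (Finset.sum_congr rfl fun i _ => ?_)
    have h := (hp i).1
    split
    · exact abs_of_nonneg (by linarith)
    · rw [abs_neg]; exact abs_of_nonneg (by linarith)
  have hSL : (n:ℝ) * L ≤ ∑ i, p i := by
    have := Finset.card_nsmul_le_sum Finset.univ p L (fun i _ => (hp i).1)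
    simpa [nsmul_eq_mul, Finset.card_univ] using this
  refine ⟨?_, ?_, ?_, ?_, ?_⟩
  · rw [bigSet, smallSet]
    exact Finset.sum_filter_add_sum_filter_not _ _ _
  · rw [hF]; linarith
  · rw [hF]
    have : 0 ≤ |diffl p x| := abs_nonneg _
    linarith
  · have := Finset.sum_le_card_nsmul (bigSet p U x) p U (fun i _ => (hp i).2)
    simpa [nsmul_eq_mul] using this
  · exact Finset.sum_nonneg fun i _ => by linarith [(hp i).1]

lemma key_n {n : ℕ} {L U : ℝ} (hL : 0 < L) (hU : 0 < U)
    (p : Fin n → ℝ) (hp : ∀ i, L ≤ p i ∧ p i ≤ U) :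
    ∀ x : Fin n → Bool, ¬ (|diffl p x| ≤ U) →
      3*(n:ℝ) ≤ (3*(n:ℝ)) * ((bigSet p U x).card : ℝ)
        + (3*(n:ℝ)/U) * ∑ i ∈ smallSet p U x, p i := by
  intro x hAx
  obtain ⟨hpart, hFU, hFL, hbig, hsmall⟩ := key_facts hL hU p hp x hAx
  have hn0 : (0:ℝ) ≤ n := Nat.cast_nonneg n
  by_cases hc : (bigSet p U x).Nonempty
  · have hcard : (1:ℝ) ≤ ((bigSet p U x).card : ℝ) := by
      have := Finset.card_pos.mpr hc
      exact_mod_cast this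
    have h2 : 0 ≤ (3*(n:ℝ)/U) * ∑ i ∈ smallSet p U x, p i := by positivity
    nlinarith
  · have hempty : bigSet p U x = ∅ := Finset.not_nonempty_iff_eq_empty.mp hc
    have hz : (∑ i ∈ bigSet p U x, p i) = 0 := by rw [hempty]; simp
    have hsF : (∑ i ∈ smallSet p U x, p i) = ∑ j ∈ fullerSet p x, p j := by linarith
    rw [hsF]
    have h1 : (3*(n:ℝ)/U) * U ≤ (3*(n:ℝ)/U) * ∑ j ∈ fullerSet p x, p j :=
      mul_le_mul_of_nonneg_left hFU.le (by positivity)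
    have h2 : (3*(n:ℝ)/U) * U = 3*(n:ℝ) := by field_simp
    have h3 : 0 ≤ (3*(n:ℝ)) * ((bigSet p U x).card : ℝ) := by positivity
    linarith

lemma key_R {n : ℕ} {L U : ℝ} (hL : 0 < L) (hU : 0 < U)
    (p : Fin n → ℝ) (hp : ∀ i, L ≤ p i ∧ p i ≤ U) :
    ∀ x : Fin n → Bool, ¬ (|diffl p x| ≤ U) →
      3*(n:ℝ) ≤ (12*U/L) * ((bigSet p U x).card : ℝ)
        + (12/L) * ∑ i ∈ smallSet p U x, p i := by
  intro x hAx
  obtain ⟨hpart, hFU, hFL, hbig, hsmall⟩ := key_facts hL hU p hp x hAx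
  have hn0 : (0:ℝ) ≤ n := Nat.cast_nonneg n
  have hcard0 : (0:ℝ) ≤ ((bigSet p U x).card : ℝ) := Nat.cast_nonneg _
  by_cases hc : (n:ℝ) * L / 4 ≤ ((bigSet p U x).card : ℝ) * U
  · have h1 : (12/L) * ((n:ℝ) * L / 4) ≤ (12/L) * (((bigSet p U x).card : ℝ) * U) :=
      mul_le_mul_of_nonneg_left hc (by positivity)
    have h2 : (12/L) * ((n:ℝ) * L / 4) = 3*(n:ℝ) := by field_simp; ring
    have h3 : (12/L) * (((bigSet p U x).card : ℝ) * U) = (12*U/L) * ((bigSet p U x).card : ℝ) := by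
      ring
    have h4 : 0 ≤ (12/L) * ∑ i ∈ smallSet p U x, p i := by positivity
    nlinarith
  · push_neg at hc
    have hss : (n:ℝ) * L / 4 ≤ ∑ i ∈ smallSet p U x, p i := by nlinarith
    have h1 : (12/L) * ((n:ℝ) * L / 4) ≤ (12/L) * ∑ i ∈ smallSet p U x, p i :=
      mul_le_mul_of_nonneg_left hss (by positivity)
    have h2 : (12/L) * ((n:ℝ) * L / 4) = 3*(n:ℝ) := by field_simp; ring
    have h3 : 0 ≤ (12*U/L) * ((bigSet p U x).card : ℝ) := by positivity
    linarith

end Stmt14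

/-- In the adversary model of dynamic makespan scheduling with processing times
in `[L, U]` and `R = U/L`, if the current solution `x₀` has discrepancy at most `U` (w.r.t. the
old processing times `p₀`) and the adversary changes the processing time of one job, yielding
new processing times `p₁`, then both RLS and the (1+1) EA recover a solution with discrepancy
at most `U` in expected time `O(min{R, n})`. -/
theorem stmt_14 :
    ∃ c : ℝ, 0 < c ∧ ∃ n₀ : ℕ, ∀ n : ℕ, n₀ ≤ n → ∀ L U : ℝ, 0 < L → L ≤ U →
      ∀ p₀ p₁ : Fin n → ℝ, (∀ i, L ≤ p₀ i ∧ p₀ i ≤ U) → (∀ i, L ≤ p₁ i ∧ p₁ i ≤ U) →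
        (Finset.univ.filter fun i => p₁ i ≠ p₀ i).card ≤ 1 →
          ∀ x₀ : Fin n → Bool, disc p₀ x₀ ≤ U →
            (hitTime (eaKernel (pmutRLS n) fun x z => mkspan p₁ z ≤ mkspan p₁ x)
                (fun x => disc p₁ x ≤ U) x₀ ≤
              ENNReal.ofReal (c * min (U / L) (n : ℝ))) ∧
            (hitTime (eaKernel (pmutEA n) fun x z => mkspan p₁ z ≤ mkspan p₁ x)
                (fun x => disc p₁ x ≤ U) x₀ ≤
              ENNReal.ofReal (c * min (U / L) (n : ℝ))) := by
  classical
  refine ⟨36, by norm_num, 1, ?_⟩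
  intro n hn L U hL hLU p₀ p₁ hp₀ hp₁ hcard x₀ hdisc
  rcases eq_or_lt_of_le hLU with hEq | hlt
  · -- degenerate case L = U : nothing changed, target already reached
    have hA : disc p₁ x₀ ≤ U := by
      have hpe : p₁ = p₀ := by
        funext i
        have h1 := hp₁ i
        have h0 := hp₀ i
        have e1 : p₁ i = L := le_antisymm (by rw [hEq]; exact h1.2) h1.1
        have e0 : p₀ i = L := le_antisymm (by rw [hEq]; exact h0.2) h0.1
        rw [e1, e0]
      rw [hpe]
      exact hdisc
    constructor
    · rw [Stmt14.hitTime_eq_zero (eaKernel (pmutRLS n) fun x z => mkspan p₁ z ≤ mkspan p₁ x)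
        (fun x => disc p₁ x ≤ U) x₀ hA]
      exact zero_le
    · rw [Stmt14.hitTime_eq_zero (eaKernel (pmutEA n) fun x z => mkspan p₁ z ≤ mkspan p₁ x)
        (fun x => disc p₁ x ≤ U) x₀ hA]
      exact zero_le
  · have hn1 : 1 ≤ n := hn
    have hU : 0 < U := lt_trans hL hlt
    have hx₀ : disc p₁ x₀ ≤ 2*U - L := by
      have hpert := Stmt14.diffl_perturb hLU p₀ p₁ hp₀ hp₁ hcard x₀
      rw [Stmt14.disc_eq] at hdisc ⊢
      have habs : |Stmt14.diffl p₁ x₀| - |Stmt14.diffl p₀ x₀|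
          ≤ |Stmt14.diffl p₁ x₀ - Stmt14.diffl p₀ x₀| := abs_sub_abs_le_abs_sub _ _
      linarith
    have hn0 : (0:ℝ) ≤ n := Nat.cast_nonneg n
    have hgen : ∀ pm : (Fin n → Bool) → (Fin n → Bool) → ℝ≥0∞,
        (∀ x, ∑ z, pm x z ≤ 1) →
        (∀ (x : Fin n → Bool) (i : Fin n),
          ENNReal.ofReal (1/(3*(n:ℝ))) ≤ pm x (Function.update x i (!(x i)))) →
        hitTime (eaKernel pm fun x z => mkspan p₁ z ≤ mkspan p₁ x)
          (fun x => disc p₁ x ≤ U) x₀ ≤ ENNReal.ofReal (36 * min (U / L) (n : ℝ)) := by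
      intro pm hmass hflip
      by_cases hmin : U/L ≤ (n:ℝ)
      · have h := Stmt14.main_bound hn1 hL hlt p₁ hp₁ pm hmass hflip
          (12*U/L) (12/L) (by positivity) (by positivity)
          (Stmt14.key_R hL hU p₁ hp₁) x₀ hx₀
        refine h.trans (ENNReal.ofReal_le_ofReal ?_)
        rw [min_eq_left hmin]
        have heq : 36*(U/L) - (12*U/L + 12/L*(2*(U-L))) = 24 := by
          field_simp
          ring
        linarith
      · push_neg at hmin
        have h := Stmt14.main_bound hn1 hL hlt p₁ hp₁ pm hmass hflip
          (3*(n:ℝ)) (3*(n:ℝ)/U) (by positivity) (by positivity)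
          (Stmt14.key_n hL hU p₁ hp₁) x₀ hx₀
        refine h.trans (ENNReal.ofReal_le_ofReal ?_)
        rw [min_eq_right hmin.le]
        have hα2 : (3*(n:ℝ)/U)*(2*(U-L)) ≤ 6*(n:ℝ) := by
          rw [div_mul_eq_mul_div, div_le_iff₀ hU]
          nlinarith
        linarith
    exact ⟨hgen (pmutRLS n) (fun x => Stmt14.rls_mass hn1 x)
        (fun x i => Stmt14.rls_flip hn1 x i),
      hgen (pmutEA n) (fun x => le_of_eq (Stmt14.ea_mass hn1 x))
        (fun x i => Stmt14.ea_flip hn1 x i)⟩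
end
end
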